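/- arXiv:0906.1692 — 6 statements merged into one kernel-verified Lean document; each statement's English description precedes it below -/
import Mathlib

section
/- Let 𝔤 be a finite-dimensional real semisimple Lie algebra and (𝔭, 𝔮) a complementary pair of height-one parabolic subalgebras of 𝔤. Then there exists a unique element ξ ∈ 𝔤 (the grading element of the pair) such that ⁅ξ, x⁆ = −x for all x ∈ 𝔭^⊥, ⁅ξ, x⁆ = 0 for all x ∈ 𝔭 ∩ 𝔮, and ⁅ξ, x⁆ = x for all x ∈ 𝔮^⊥; moreover ξ lies in the centre of the Lie subalgebra 𝔭 ∩ 𝔮. -/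
open LieAlgebra Module

variable {L : Type*} [LieRing L] [LieAlgebra ℝ L]

/-- The Killing polar `𝔭^⊥` of a Lie subalgebra. -/
def killingPolar (p : LieSubalgebra ℝ L) : Submodule ℝ L where
  carrier := {x | ∀ y ∈ p, killingForm ℝ L x y = 0}
  add_mem' := fun ha hb => fun y hy => by simp [ha y hy, hb y hy]
  zero_mem' := fun y hy => by simp
  smul_mem' := fun c a ha => fun y hy => by simp [ha y hy]

/-- A height-one parabolic subalgebra: the Killing polar is an abelian
(hence nilpotent) subalgebra. -/
def IsH1Parabolic (p : LieSubalgebra ℝ L) : Prop :=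
  ∀ x ∈ killingPolar p, ∀ y ∈ killingPolar p, ⁅x, y⁆ = (0 : L)

/-- Complementary pair of height-one parabolic subalgebras:
`𝔤 = 𝔭 ⊕ 𝔮^⊥` and `𝔤 = 𝔮 ⊕ 𝔭^⊥` as direct sums of subspaces. -/
def ComplPair (p q : LieSubalgebra ℝ L) : Prop :=
  IsCompl p.toSubmodule (killingPolar q) ∧ IsCompl q.toSubmodule (killingPolar p)

lemma mem_killingPolar_iff {r : LieSubalgebra ℝ L} {x : L} :
    x ∈ killingPolar r ↔ ∀ y ∈ r, killingForm ℝ L x y = 0 := Iff.rfl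

lemma killingPolar_eq_orthogonal (r : LieSubalgebra ℝ L) :
    killingPolar r = (killingForm ℝ L).orthogonal r.toSubmodule := by
  ext x
  rw [mem_killingPolar_iff, LinearMap.BilinForm.mem_orthogonal_iff]
  constructor
  · intro h y hy
    exact (LieModule.traceForm_comm ℝ L L y x).trans (h y hy)
  · intro h y hy
    exact (LieModule.traceForm_comm ℝ L L x y).trans (h y hy)

omit [LieAlgebra ℝ L] in
lemma lie_swap (a b : L) : ⁅a, b⁆ = -⁅b, a⁆ := (lie_skew (x := a) (y := b)).symm

/-- The polar of a subalgebra is invariant under the adjoint action of the subalgebra. -/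
lemma lie_mem_killingPolar (r : LieSubalgebra ℝ L) {a x : L} (ha : a ∈ r)
    (hx : x ∈ killingPolar r) : ⁅a, x⁆ ∈ killingPolar r := by
  intro y hy
  rw [lie_swap a x, LinearMap.map_neg₂, LieModule.traceForm_apply_lie_apply,
    hx _ (r.lie_mem ha hy), neg_zero]

/-- The bracket of an element of `𝔭^⊥` with an element of `𝔮^⊥` lies in `𝔭`
(provided the Killing form is nondegenerate). -/
lemma lie_polar_polar_mem [FiniteDimensional ℝ L]
    (hnd : (killingForm ℝ L).Nondegenerate)
    (p q : LieSubalgebra ℝ L) (hp : IsH1Parabolic p)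
    {x u : L} (hx : x ∈ killingPolar p) (_hu : u ∈ killingPolar q) :
    ⁅x, u⁆ ∈ p := by
  have href : (killingForm ℝ L).IsRefl := (LieModule.traceForm_isSymm ℝ L L).isRefl
  have hmem : ⁅x, u⁆ ∈ (killingForm ℝ L).orthogonal (killingPolar p) := by
    intro w hw
    have h1 : ⁅x, w⁆ = 0 := hp x hx w hw
    have : killingForm ℝ L ⁅x, u⁆ w = 0 := by
      rw [lie_swap x u, LinearMap.map_neg₂, LieModule.traceForm_apply_lie_apply, h1,
        map_zero, neg_zero]
    show killingForm ℝ L w ⁅x, u⁆ = 0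
    rwa [LieModule.traceForm_comm] at this
  rwa [killingPolar_eq_orthogonal,
    LinearMap.BilinForm.orthogonal_orthogonal hnd href] at hmem

/-- Total isotropy of the polar. -/
lemma polar_isotropic [FiniteDimensional ℝ L]
    (hnd : (killingForm ℝ L).Nondegenerate)
    (p q : LieSubalgebra ℝ L) (hp : IsH1Parabolic p)
    (hco : p.toSubmodule ⊔ killingPolar q = ⊤)
    {x y : L} (hx : x ∈ killingPolar p) (hy : y ∈ killingPolar p) :
    killingForm ℝ L x y = 0 := by
  have hrange : ∀ v : L, ⁅x, ⁅y, v⁆⁆ ∈ killingPolar p := by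
    intro v
    have hv : v ∈ p.toSubmodule ⊔ killingPolar q := by rw [hco]; trivial
    obtain ⟨a, ha, u, hu, rfl⟩ := Submodule.mem_sup.mp hv
    rw [lie_add, lie_add]
    apply add_mem
    · have h1 : ⁅y, a⁆ ∈ killingPolar p := by
        rw [lie_swap y a]
        exact neg_mem (lie_mem_killingPolar p ha hy)
      rw [hp x hx _ h1]
      exact zero_mem _
    · have h2 : ⁅y, u⁆ ∈ p := lie_polar_polar_mem hnd p q hp hy hu
      rw [lie_swap x ⁅y, u⁆]
      exact neg_mem (lie_mem_killingPolar p h2 hx)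
  have hnil : IsNilpotent (ad ℝ L x ∘ₗ ad ℝ L y) := by
    refine ⟨2, ?_⟩
    rw [pow_two, Module.End.mul_eq_comp]
    ext v
    have h1 : ⁅y, ⁅x, ⁅y, v⁆⁆⁆ = 0 := hp y hy _ (hrange v)
    simp [LieAlgebra.ad_apply, h1]
  have := LinearMap.isNilpotent_trace_of_isNilpotent hnil
  rw [killingForm_apply_apply]
  exact this.eq_zero

/-- **Existence and uniqueness of the grading element** of a complementary pair
`(𝔭, 𝔮)` of height-one parabolic subalgebras: there is a unique `ξ ∈ 𝔤` acting by
`-1` on `𝔭^⊥`, `0` on `𝔭 ∩ 𝔮` and `+1` on `𝔮^⊥`; moreover `ξ` lies in the centre of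
the subalgebra `𝔭 ∩ 𝔮`. -/
theorem exists_unique_grading_element
    [FiniteDimensional ℝ L] [LieAlgebra.IsSemisimple ℝ L]
    (p q : LieSubalgebra ℝ L) (hp : IsH1Parabolic p) (hq : IsH1Parabolic q)
    (hpq : ComplPair p q) :
    ∃ ξ : L,
      ((∀ x ∈ killingPolar p, ⁅ξ, x⁆ = -x) ∧
        (∀ x, x ∈ p → x ∈ q → ⁅ξ, x⁆ = (0 : L)) ∧
        (∀ x ∈ killingPolar q, ⁅ξ, x⁆ = x)) ∧
      -- uniqueness
      (∀ ξ' : L,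
        ((∀ x ∈ killingPolar p, ⁅ξ', x⁆ = -x) ∧
          (∀ x, x ∈ p → x ∈ q → ⁅ξ', x⁆ = (0 : L)) ∧
          (∀ x ∈ killingPolar q, ⁅ξ', x⁆ = x)) → ξ' = ξ) ∧
      -- the grading element lies in the centre of 𝔭 ∩ 𝔮
      (ξ ∈ p ∧ ξ ∈ q ∧ ∀ x, x ∈ p → x ∈ q → ⁅ξ, x⁆ = (0 : L)) := by
  classical
  -- the Killing form is nondegenerate
  haveI hK : LieAlgebra.IsKilling ℝ L := by
    constructor
    have hsub : ∀ x : L, x ∈ LieIdeal.killingCompl ℝ L ⊤ → x ∈ killingPolar p := by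
      intro x hx y hy
      rw [LieModule.traceForm_comm]
      exact (LieIdeal.mem_killingCompl ℝ L ⊤).mp hx y (by simp)
    haveI : IsLieAbelian (LieIdeal.killingCompl ℝ L ⊤) := by
      constructor
      intro a b
      exact Subtype.ext (hp _ (hsub _ a.2) _ (hsub _ b.2))
    exact LieAlgebra.HasTrivialRadical.eq_bot_of_isSolvable _
  have hnd : (killingForm ℝ L).Nondegenerate :=
    LieAlgebra.IsKilling.killingForm_nondegenerate ℝ L
  have href : (killingForm ℝ L).IsRefl := (LieModule.traceForm_isSymm ℝ L L).isRefl
  -- isotropy and inclusions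
  have hisoP : ∀ x ∈ killingPolar p, ∀ y ∈ killingPolar p, killingForm ℝ L x y = 0 :=
    fun x hx y hy => polar_isotropic hnd p q hp hpq.1.codisjoint.eq_top hx hy
  have hisoQ : ∀ x ∈ killingPolar q, ∀ y ∈ killingPolar q, killingForm ℝ L x y = 0 :=
    fun x hx y hy => polar_isotropic hnd q p hq hpq.2.codisjoint.eq_top hx hy
  have hPinP : killingPolar p ≤ p.toSubmodule := by
    intro x hx
    have : x ∈ (killingForm ℝ L).orthogonal (killingPolar p) := by
      intro w hw
      show killingForm ℝ L w x = 0
      exact hisoP w hw x hx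
    rwa [killingPolar_eq_orthogonal,
      LinearMap.BilinForm.orthogonal_orthogonal hnd href] at this
  have hQinQ : killingPolar q ≤ q.toSubmodule := by
    intro x hx
    have : x ∈ (killingForm ℝ L).orthogonal (killingPolar q) := by
      intro w hw
      show killingForm ℝ L w x = 0
      exact hisoQ w hw x hx
    rwa [killingPolar_eq_orthogonal,
      LinearMap.BilinForm.orthogonal_orthogonal hnd href] at this
  -- decomposition of an arbitrary element
  have hdecomp : ∀ v : L, ∃ w ∈ killingPolar p, ∃ b, (b ∈ p ∧ b ∈ q) ∧
      ∃ u ∈ killingPolar q, v = w + b + u := by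
    intro v
    have hv : v ∈ p.toSubmodule ⊔ killingPolar q := by
      rw [hpq.1.codisjoint.eq_top]; trivial
    obtain ⟨a, ha, u, hu, hau⟩ := Submodule.mem_sup.mp hv
    have ha' : a ∈ q.toSubmodule ⊔ killingPolar p := by
      rw [hpq.2.codisjoint.eq_top]; trivial
    obtain ⟨b, hb, w, hw, hbw⟩ := Submodule.mem_sup.mp ha'
    have hbp : b ∈ p := by
      have : b = a - w := by rw [← hbw]; abel
      rw [this]
      exact sub_mem ha (hPinP hw)
    exact ⟨w, hw, b, ⟨hbp, hb⟩, u, hu, by rw [← hau, ← hbw]; abel⟩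
  -- the grading derivation
  have hc1 : IsCompl (killingPolar q) p.toSubmodule := hpq.1.symm
  have hc2 : IsCompl (killingPolar p) q.toSubmodule := hpq.2.symm
  set P : L →ₗ[ℝ] L :=
    (killingPolar q).subtype ∘ₗ Submodule.linearProjOfIsCompl _ _ hc1 with hP
  set Q : L →ₗ[ℝ] L :=
    (killingPolar p).subtype ∘ₗ Submodule.linearProjOfIsCompl _ _ hc2 with hQ
  set D : L →ₗ[ℝ] L := P - Q with hD
  have hDm : ∀ w ∈ killingPolar p, D w = -w := by
    intro w hw
    have h1 : Submodule.linearProjOfIsCompl _ _ hc1 w = 0 :=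
      Submodule.linearProjOfIsCompl_apply_right' hc1 (hPinP hw)
    have h2 : Submodule.linearProjOfIsCompl _ _ hc2 w = ⟨w, hw⟩ :=
      Submodule.linearProjOfIsCompl_apply_left hc2 ⟨w, hw⟩
    simp [hD, hP, hQ, h1, h2]
  have hD0 : ∀ b, b ∈ p → b ∈ q → D b = 0 := by
    intro b hbp hbq
    have h1 : Submodule.linearProjOfIsCompl _ _ hc1 b = 0 :=
      Submodule.linearProjOfIsCompl_apply_right' hc1 hbp
    have h2 : Submodule.linearProjOfIsCompl _ _ hc2 b = 0 :=
      Submodule.linearProjOfIsCompl_apply_right' hc2 hbq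
    simp [hD, hP, hQ, h1, h2]
  have hDp : ∀ u ∈ killingPolar q, D u = u := by
    intro u hu
    have h1 : Submodule.linearProjOfIsCompl _ _ hc1 u = ⟨u, hu⟩ :=
      Submodule.linearProjOfIsCompl_apply_left hc1 ⟨u, hu⟩
    have h2 : Submodule.linearProjOfIsCompl _ _ hc2 u = 0 :=
      Submodule.linearProjOfIsCompl_apply_right' hc2 (hQinQ hu)
    simp [hD, hP, hQ, h1, h2]
  -- Leibniz rule
  have hleib : ∀ a b : L, D ⁅a, b⁆ = ⁅a, D b⁆ - ⁅b, D a⁆ := by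
    intro a b
    obtain ⟨w, hw, c, ⟨hcp, hcq⟩, u, hu, rfl⟩ := hdecomp a
    obtain ⟨w', hw', c', ⟨hcp', hcq'⟩, u', hu', rfl⟩ := hdecomp b
    have hww' : ⁅w, w'⁆ = 0 := hp w hw w' hw'
    have huu' : ⁅u, u'⁆ = 0 := hq u hu u' hu'
    have m12 : ⁅w, c'⁆ ∈ killingPolar p := by
      rw [lie_swap w c']; exact neg_mem (lie_mem_killingPolar p hcp' hw)
    have m21 : ⁅c, w'⁆ ∈ killingPolar p := lie_mem_killingPolar p hcp hw'
    have m23 : ⁅c, u'⁆ ∈ killingPolar q := lie_mem_killingPolar q hcq hu'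
    have m32 : ⁅u, c'⁆ ∈ killingPolar q := by
      rw [lie_swap u c']; exact neg_mem (lie_mem_killingPolar q hcq' hu)
    have m13p : ⁅w, u'⁆ ∈ p := lie_polar_polar_mem hnd p q hp hw hu'
    have m13q : ⁅w, u'⁆ ∈ q := by
      rw [lie_swap w u']
      exact neg_mem (lie_polar_polar_mem hnd q p hq hu' hw)
    have m31p : ⁅u, w'⁆ ∈ p := by
      rw [lie_swap u w']
      exact neg_mem (lie_polar_polar_mem hnd p q hp hw' hu)
    have m31q : ⁅u, w'⁆ ∈ q := lie_polar_polar_mem hnd q p hq hu hw'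
    have m22p : ⁅c, c'⁆ ∈ p := p.lie_mem hcp hcp'
    have m22q : ⁅c, c'⁆ ∈ q := q.lie_mem hcq hcq'
    have hDb : D (w' + c' + u') = u' - w' := by
      rw [map_add, map_add, hDm w' hw', hD0 c' hcp' hcq', hDp u' hu']; abel
    have hDa : D (w + c + u) = u - w := by
      rw [map_add, map_add, hDm w hw, hD0 c hcp hcq, hDp u hu]; abel
    rw [hDa, hDb]
    have expand : ⁅w + c + u, w' + c' + u'⁆ =
        ⁅w, w'⁆ + ⁅w, c'⁆ + ⁅w, u'⁆ + ⁅c, w'⁆ + ⁅c, c'⁆ + ⁅c, u'⁆ +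
          ⁅u, w'⁆ + ⁅u, c'⁆ + ⁅u, u'⁆ := by
      simp only [lie_add, add_lie]; abel
    rw [expand, hww', huu']
    rw [map_add, map_add, map_add, map_add, map_add, map_add, map_add, map_add,
      map_zero, hDm _ m12, hDm _ m21, hD0 _ m13p m13q, hD0 _ m31p m31q,
      hD0 _ m22p m22q, hDp _ m23, hDp _ m32]
    have e1 : ⁅w + c + u, u' - w'⁆ =
        ⁅w, u'⁆ + ⁅c, u'⁆ + ⁅u, u'⁆ - ⁅w, w'⁆ - ⁅c, w'⁆ - ⁅u, w'⁆ := by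
      simp only [lie_sub, add_lie]; abel
    have e2 : ⁅w' + c' + u', u - w⁆ =
        -⁅u, w'⁆ - ⁅u, c'⁆ - ⁅u, u'⁆ + ⁅w, w'⁆ + ⁅w, c'⁆ + ⁅w, u'⁆ := by
      simp only [lie_sub, add_lie, lie_swap w' u, lie_swap c' u, lie_swap u' u,
        lie_swap w' w, lie_swap c' w, lie_swap u' w]
      abel
    rw [e1, e2, hww', huu']
    abel
  -- the grading element
  obtain ⟨ξ, hξ⟩ := LieDerivation.IsKilling.exists_eq_ad (⟨D, hleib⟩ : LieDerivation ℝ L L)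
  have hact : ∀ v : L, ⁅ξ, v⁆ = D v := by
    intro v
    have h := DFunLike.congr_fun hξ v
    simpa using h
  have hActm : ∀ x ∈ killingPolar p, ⁅ξ, x⁆ = -x := fun x hx => (hact x).trans (hDm x hx)
  have hAct0 : ∀ x, x ∈ p → x ∈ q → ⁅ξ, x⁆ = 0 := fun x h1 h2 => (hact x).trans (hD0 x h1 h2)
  have hActp : ∀ x ∈ killingPolar q, ⁅ξ, x⁆ = x := fun x hx => (hact x).trans (hDp x hx)
  -- ξ lies in p ∩ q
  obtain ⟨w, hw, b, ⟨hbp, hbq⟩, u, hu, hξdec⟩ := hdecomp ξ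
  have hDξ : D ξ = 0 := by rw [← hact ξ, lie_self]
  have huw : u - w = 0 := by
    rw [hξdec] at hDξ
    rw [map_add, map_add, hDm w hw, hD0 b hbp hbq, hDp u hu] at hDξ
    rw [← hDξ]; abel
  have hu0 : u = 0 := by
    have huw' : u = w := by rw [← sub_eq_zero]; exact huw
    have hup : u ∈ p.toSubmodule := huw' ▸ hPinP hw
    exact (Submodule.disjoint_def.mp hpq.1.disjoint) u hup hu
  have hw0 : w = 0 := by
    have : w = u := by rw [← sub_eq_zero, ← neg_sub, huw, neg_zero]
    rw [this, hu0]
  have hξb : ξ = b := by rw [hξdec, hw0, hu0]; abel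
  refine ⟨ξ, ⟨hActm, hAct0, hActp⟩, ?_, ?_⟩
  · -- uniqueness
    rintro ξ' ⟨h1, h2, h3⟩
    have hzero : ∀ v : L, ⁅ξ' - ξ, v⁆ = 0 := by
      intro v
      obtain ⟨w, hw, b, ⟨hbp, hbq⟩, u, hu, rfl⟩ := hdecomp v
      rw [sub_lie]
      rw [lie_add, lie_add, lie_add, lie_add, h1 w hw, h2 b hbp hbq, h3 u hu,
        hActm w hw, hAct0 b hbp hbq, hActp u hu]
      abel
    letI : LieRing (Module.End ℝ L) := LieRing.ofAssociativeRing
    have hker : ξ' - ξ ∈ (LieAlgebra.ad ℝ L).ker := by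
      rw [LieHom.mem_ker]
      ext v
      simpa using hzero v
    rw [LieAlgebra.ad_ker_eq_bot_of_hasTrivialRadical, LieSubmodule.mem_bot] at hker
    exact sub_eq_zero.mp hker
  · exact ⟨hξb ▸ hbp, hξb ▸ hbq, hAct0⟩
end

section
/- Let (𝔭₀, 𝔭∞) be a complementary pair of height-one parabolic subalgebras of a finite-dimensional real semisimple Lie algebra 𝔤, and let x ∈ 𝔭∞^⊥. Then ad x is nilpotent with (ad x)³ = 0, one always has 𝔭∞ ⊆ ker((ad x)²), and the height-one parabolic subalgebra exp(ad x)(𝔭₀) is complementary to both 𝔭₀ and 𝔭∞ if and only if ker((ad x)²) = 𝔭∞. -/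
open LieAlgebra Module

variable {L : Type*} [LieRing L] [LieAlgebra ℝ L]

/-- `exp (ad z)`, the finite exponential series of the adjoint action (the sum is
exhaustive whenever `ad z` is nilpotent, since then `(ad z)^(dim 𝔤 + 1) = 0`). -/
noncomputable def expAd [Module.Finite ℝ L] (z : L) : Module.End ℝ L :=
  ∑ k ∈ Finset.range (Module.finrank ℝ L + 1), (k.factorial : ℝ)⁻¹ • (ad ℝ L z) ^ k

/-! ### Auxiliary lemmas -/

lemma kp_inv (x a b : L) : killingForm ℝ L ⁅x, a⁆ b = - killingForm ℝ L a ⁅x, b⁆ :=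
  LieModule.traceForm_apply_lie_apply' ℝ L L x a b

lemma kp_inv' (x a b : L) : killingForm ℝ L ⁅x, a⁆ b = killingForm ℝ L x ⁅a, b⁆ :=
  LieModule.traceForm_apply_lie_apply ℝ L L x a b

lemma kp_comm (a b : L) : killingForm ℝ L a b = killingForm ℝ L b a :=
  LieModule.traceForm_comm ℝ L L a b

lemma lie_mem_kp (p : LieSubalgebra ℝ L) {y u : L} (hy : y ∈ p) (hu : u ∈ killingPolar p) :
    ⁅y, u⁆ ∈ killingPolar p := by
  intro z hz
  rw [kp_inv y u z, hu _ (p.lie_mem hy hz), neg_zero]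

lemma lie_mem_kp' (p : LieSubalgebra ℝ L) {y u : L} (hy : y ∈ p) (hu : u ∈ killingPolar p) :
    ⁅u, y⁆ ∈ killingPolar p := by
  rw [← lie_skew]
  exact (killingPolar p).neg_mem (lie_mem_kp p hy hu)

lemma sq_ad_eq_zero (p : LieSubalgebra ℝ L) (hp : IsH1Parabolic p) {x : L}
    (hx : x ∈ killingPolar p) {y : L} (hy : y ∈ p) : ⁅x, ⁅x, y⁆⁆ = 0 :=
  hp x hx _ (lie_mem_kp' p hy hx)

lemma sq_ad_mem (p : LieSubalgebra ℝ L) (hp : IsH1Parabolic p) {x : L}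
    (hx : x ∈ killingPolar p) (g : L) : ⁅x, ⁅x, g⁆⁆ ∈ killingPolar p := by
  intro z hz
  have h1 := kp_inv x ⁅x, g⁆ z
  have h2 := kp_inv x g ⁅x, z⁆
  have h3 : killingForm ℝ L g ⁅x, ⁅x, z⁆⁆ = 0 := by
    rw [sq_ad_eq_zero p hp hx hz, map_zero]
  rw [h1, h2, h3]; ring

lemma cube_ad_eq_zero (p : LieSubalgebra ℝ L) (hp : IsH1Parabolic p) {x : L}
    (hx : x ∈ killingPolar p) (g : L) : ⁅x, ⁅x, ⁅x, g⁆⁆⁆ = 0 :=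
  hp x hx _ (sq_ad_mem p hp hx g)

lemma cube_ad (p : LieSubalgebra ℝ L) (hp : IsH1Parabolic p) {x : L}
    (hx : x ∈ killingPolar p) : (ad ℝ L x) ^ 3 = 0 := by
  ext g
  have : ((ad ℝ L x) ^ 3) g = ⁅x, ⁅x, ⁅x, g⁆⁆⁆ := by
    simp [pow_succ, Module.End.mul_apply, ad_apply]
  rw [this, cube_ad_eq_zero p hp hx g, LinearMap.zero_apply]

lemma cube_pointwise {x : L} (h3 : (ad ℝ L x) ^ 3 = 0) (g : L) : ⁅x, ⁅x, ⁅x, g⁆⁆⁆ = 0 := by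
  have := LinearMap.congr_fun h3 g
  simpa [pow_succ, Module.End.mul_apply, ad_apply] using this

lemma lie_sq_id {x : L} (h3 : (ad ℝ L x) ^ 3 = 0) (a b : L) :
    ⁅⁅x, ⁅x, a⁆⁆, ⁅x, b⁆⁆ + ⁅⁅x, a⁆, ⁅x, ⁅x, b⁆⁆⁆ = 0 := by
  have A3 := cube_pointwise h3
  set P := ⁅⁅x, ⁅x, a⁆⁆, ⁅x, b⁆⁆ with hPdef
  set Q := ⁅⁅x, a⁆, ⁅x, ⁅x, b⁆⁆⁆ with hQdef
  have s1 : ⁅x, ⁅a, b⁆⁆ = ⁅⁅x, a⁆, b⁆ + ⁅a, ⁅x, b⁆⁆ := leibniz_lie x a b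
  have s2 : ⁅x, ⁅x, ⁅a, b⁆⁆⁆
      = ⁅⁅x, ⁅x, a⁆⁆, b⁆ + ⁅⁅x, a⁆, ⁅x, b⁆⁆ + (⁅⁅x, a⁆, ⁅x, b⁆⁆ + ⁅a, ⁅x, ⁅x, b⁆⁆⁆) := by
    rw [s1, lie_add, leibniz_lie x ⁅x, a⁆ b, leibniz_lie x a ⁅x, b⁆]
  have s3 : (0 : L) = P + (P + Q) + ((P + Q) + Q) := by
    rw [← A3 ⁅a, b⁆, s2, lie_add, lie_add, lie_add, leibniz_lie x ⁅x, ⁅x, a⁆⁆ b,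
      leibniz_lie x ⁅x, a⁆ ⁅x, b⁆, leibniz_lie x a ⁅x, ⁅x, b⁆⁆,
      A3 a, A3 b, zero_lie, lie_zero, zero_add, add_zero]
  have s4 : (3 : ℝ) • (P + Q) = 0 := by
    have h : (3 : ℝ) • (P + Q) = P + (P + Q) + ((P + Q) + Q) := by module
    rw [h, ← s3]
  rcases smul_eq_zero.mp s4 with h | h
  · norm_num at h
  · exact h

lemma lie_sq_sq {x : L} (h3 : (ad ℝ L x) ^ 3 = 0) (a b : L) :
    ⁅⁅x, ⁅x, a⁆⁆, ⁅x, ⁅x, b⁆⁆⁆ = 0 := by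
  have A3 := cube_pointwise h3
  have h := lie_sq_id h3 a ⁅x, b⁆
  rwa [A3 b, lie_zero, add_zero] at h

section FD
variable [FiniteDimensional ℝ L]

lemma kp_self_isotropic (p : LieSubalgebra ℝ L) (hp : IsH1Parabolic p) {u v : L}
    (hu : u ∈ killingPolar p) (hv : v ∈ killingPolar p) : killingForm ℝ L u v = 0 := by
  have sq : ∀ w ∈ killingPolar p, killingForm ℝ L w w = 0 := by
    intro w hw
    have h3 : (ad ℝ L w) ^ 3 = 0 := cube_ad p hp hw
    have hnil : IsNilpotent ((ad ℝ L w) ∘ₗ (ad ℝ L w)) := by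
      refine ⟨2, ?_⟩
      have h : ((ad ℝ L w) ∘ₗ (ad ℝ L w)) ^ 2 = (ad ℝ L w) ^ 3 * (ad ℝ L w) := by
        show ((ad ℝ L w) * (ad ℝ L w)) ^ 2 = _
        rw [← pow_two, ← pow_mul, ← pow_succ]
      rw [h, h3, zero_mul]
    have ht := LinearMap.isNilpotent_trace_of_isNilpotent hnil
    rw [killingForm_apply_apply]
    exact ht.eq_zero
  have h1 := sq (u + v) ((killingPolar p).add_mem hu hv)
  have h2 := sq u hu
  have h3 := sq v hv
  have h4 : killingForm ℝ L u v = killingForm ℝ L v u := kp_comm u v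
  simp only [map_add, LinearMap.add_apply] at h1
  linarith

lemma ad_eq_zero_of_finrank_le_one {x : L} (h : Module.finrank ℝ L ≤ 1) : ad ℝ L x = 0 := by
  interval_cases h1 : Module.finrank ℝ L
  · have : Subsingleton L := Module.finrank_zero_iff.mp h1
    exact LinearMap.ext fun g => Subsingleton.elim _ _
  · have : Nontrivial L := Module.nontrivial_of_finrank_pos (R := ℝ) (by omega)
    obtain ⟨e, he⟩ := exists_ne (0 : L)
    have hsp : Submodule.span ℝ {e} = ⊤ := by
      apply Submodule.eq_top_of_finrank_eq
      rw [finrank_span_singleton he, h1]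
    have hmem : ∀ g : L, ∃ c : ℝ, g = c • e := by
      intro g
      have hg : g ∈ Submodule.span ℝ {e} := by rw [hsp]; trivial
      obtain ⟨c, hc⟩ := Submodule.mem_span_singleton.mp hg
      exact ⟨c, hc.symm⟩
    ext g
    obtain ⟨c, rfl⟩ := hmem g
    obtain ⟨d, hd⟩ := hmem x
    rw [ad_apply, hd]
    simp [lie_smul, smul_lie]

lemma expAd_apply {x : L} (h3 : (ad ℝ L x) ^ 3 = 0) (g : L) :
    expAd x g = g + ⁅x, g⁆ + (2⁻¹ : ℝ) • ⁅x, ⁅x, g⁆⁆ := by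
  by_cases hfr : 2 ≤ Module.finrank ℝ L
  · have hsum : expAd x = ∑ k ∈ Finset.range 3, (k.factorial : ℝ)⁻¹ • (ad ℝ L x) ^ k := by
      rw [expAd]
      symm
      apply Finset.sum_subset
      · intro k hk; simp only [Finset.mem_range] at hk ⊢; omega
      · intro k _ hnk
        simp only [Finset.mem_range] at hnk
        have hz : (ad ℝ L x) ^ k = 0 := by
          have hk : (ad ℝ L x) ^ k = (ad ℝ L x) ^ 3 * (ad ℝ L x) ^ (k - 3) := by
            rw [← pow_add]; congr 1; omega
          rw [hk, h3, zero_mul]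
        rw [hz, smul_zero]
    rw [hsum]
    simp only [Finset.sum_range_succ, Finset.sum_range_zero, zero_add, pow_zero, pow_one,
      Nat.factorial, Nat.cast_ofNat, Nat.cast_one, inv_one, one_smul,
      LinearMap.add_apply, LinearMap.smul_apply, Module.End.one_apply]
    rw [pow_two]
    simp only [Module.End.mul_apply, ad_apply]
    norm_num
  · have hA : ad ℝ L x = 0 := ad_eq_zero_of_finrank_le_one (by omega)
    have hlie : ∀ y : L, ⁅x, y⁆ = 0 := by
      intro y
      have h := LinearMap.congr_fun hA y
      rwa [ad_apply, LinearMap.zero_apply] at h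
    rw [expAd]
    rw [Finset.sum_range_succ']
    simp [hA, hlie, zero_pow]

lemma expAd_lie {x : L} (h3 : (ad ℝ L x) ^ 3 = 0) (a b : L) :
    expAd x ⁅a, b⁆ = ⁅expAd x a, expAd x b⁆ := by
  have A3 := cube_pointwise h3
  have hQ0 := lie_sq_sq h3 a b
  have hPQ : ⁅⁅x, ⁅x, a⁆⁆, ⁅x, b⁆⁆ = -⁅⁅x, a⁆, ⁅x, ⁅x, b⁆⁆⁆ :=
    eq_neg_of_add_eq_zero_left (lie_sq_id h3 a b)
  rw [expAd_apply h3, expAd_apply h3, expAd_apply h3]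
  have s1 : ⁅x, ⁅a, b⁆⁆ = ⁅⁅x, a⁆, b⁆ + ⁅a, ⁅x, b⁆⁆ := leibniz_lie x a b
  have s2 : ⁅x, ⁅x, ⁅a, b⁆⁆⁆
      = ⁅⁅x, ⁅x, a⁆⁆, b⁆ + ⁅⁅x, a⁆, ⁅x, b⁆⁆ + (⁅⁅x, a⁆, ⁅x, b⁆⁆ + ⁅a, ⁅x, ⁅x, b⁆⁆⁆) := by
    rw [s1, lie_add, leibniz_lie x ⁅x, a⁆ b, leibniz_lie x a ⁅x, b⁆]
  rw [s2, s1]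
  simp only [add_lie, lie_add, smul_lie, lie_smul, hQ0, smul_zero, hPQ]
  module

lemma expAd_killing {x : L} (h3 : (ad ℝ L x) ^ 3 = 0) (a b : L) :
    killingForm ℝ L (expAd x a) (expAd x b) = killingForm ℝ L a b := by
  have A3 := cube_pointwise h3
  have s1 : ∀ z w : L, killingForm ℝ L z ⁅x, w⁆ = - killingForm ℝ L ⁅x, z⁆ w := by
    intro z w
    have h := kp_inv x z w
    linarith
  rw [expAd_apply h3, expAd_apply h3]
  simp only [map_add, LinearMap.add_apply, map_smul, LinearMap.smul_apply, smul_eq_mul,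
    LinearMap.map_smul₂]
  simp only [s1, A3, map_zero, LinearMap.zero_apply, map_neg, LinearMap.neg_apply]
  ring

lemma expAd_leftinv {x : L} (h3 : (ad ℝ L x) ^ 3 = 0) (g : L) :
    expAd x (g - ⁅x, g⁆ + (2⁻¹ : ℝ) • ⁅x, ⁅x, g⁆⁆) = g := by
  have A3 := cube_pointwise h3
  rw [expAd_apply h3]
  simp only [lie_add, lie_sub, lie_smul, A3, smul_zero, lie_zero, add_zero, sub_zero]
  module

variable [LieAlgebra.IsSemisimple ℝ L]

lemma kp_nondeg (p : LieSubalgebra ℝ L) (hp : IsH1Parabolic p)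
    {z : L} (hz : ∀ w : L, killingForm ℝ L z w = 0) : z = 0 := by
  have habs : IsLieAbelian (LieIdeal.killingCompl ℝ L ⊤) := by
    constructor
    intro a b
    have ha : (a : L) ∈ killingPolar p := by
      intro y _
      have h := (LieIdeal.mem_killingCompl (I := (⊤ : LieIdeal ℝ L))).mp a.2
      rw [kp_comm]
      exact h y trivial
    have hb : (b : L) ∈ killingPolar p := by
      intro y _
      have h := (LieIdeal.mem_killingCompl (I := (⊤ : LieIdeal ℝ L))).mp b.2
      rw [kp_comm]
      exact h y trivial
    have h0 : ⁅(a : L), (b : L)⁆ = 0 := hp _ ha _ hb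
    exact Subtype.ext (by simpa using h0)
  have hbot : LieIdeal.killingCompl ℝ L ⊤ = ⊥ :=
    (LieAlgebra.hasTrivialRadical_iff_no_abelian_ideals ℝ L).mp inferInstance _ habs
  have hzmem : z ∈ LieIdeal.killingCompl ℝ L ⊤ := by
    rw [LieIdeal.mem_killingCompl]
    intro y _
    rw [kp_comm]; exact hz y
  rw [hbot] at hzmem
  simpa using hzmem

lemma mem_of_perp_polar (p q : LieSubalgebra ℝ L) (hp : IsH1Parabolic p)
    (h1 : IsCompl p.toSubmodule (killingPolar q))
    (h2 : IsCompl q.toSubmodule (killingPolar p))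
    {z : L} (hz : ∀ d ∈ killingPolar p, killingForm ℝ L z d = 0) :
    z ∈ p.toSubmodule := by
  have hztop : z ∈ p.toSubmodule ⊔ killingPolar q := by rw [h1.codisjoint.eq_top]; trivial
  obtain ⟨a, ha, b, hb, hab⟩ := Submodule.mem_sup.mp hztop
  have hb0 : b = 0 := by
    apply kp_nondeg p hp
    intro w
    have hwtop : w ∈ q.toSubmodule ⊔ killingPolar p := by rw [h2.codisjoint.eq_top]; trivial
    obtain ⟨c, hcmem, d, hd, hw⟩ := Submodule.mem_sup.mp hwtop
    have e1 : killingForm ℝ L b c = 0 := hb c ((LieSubalgebra.mem_toSubmodule (L' := q)).mp hcmem)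
    have e2 : killingForm ℝ L b d = 0 := by
      have hbz : b = z - a := by rw [← hab]; abel
      have e3 : killingForm ℝ L a d = 0 := by
        rw [kp_comm]; exact hd a ((LieSubalgebra.mem_toSubmodule (L' := p)).mp ha)
      rw [hbz, map_sub, LinearMap.sub_apply, hz d hd, e3, sub_zero]
    rw [← hw, map_add, e1, e2, add_zero]
  rw [← hab, hb0, add_zero]
  exact ha

lemma polar_le (p q : LieSubalgebra ℝ L) (hp : IsH1Parabolic p)
    (h1 : IsCompl p.toSubmodule (killingPolar q))
    (h2 : IsCompl q.toSubmodule (killingPolar p)) :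
    killingPolar p ≤ p.toSubmodule := fun _ hv =>
  mem_of_perp_polar p q hp h1 h2 (fun d hd => kp_self_isotropic p hp hv hd)

end FD

/-- For a complementary pair `(𝔭₀, 𝔭∞)` of height-one parabolic subalgebras and
`x ∈ 𝔭∞^⊥`: `ad x` is nilpotent with `(ad x)³ = 0`; always `𝔭∞ ⊆ ker (ad x)²`;
and `exp(ad x)(𝔭₀)` — which is again a height-one parabolic subalgebra — is
complementary to both `𝔭₀` and `𝔭∞` if and only if `ker (ad x)² = 𝔭∞`. -/
theorem expAd_complementary_iff_ker_sq
    [FiniteDimensional ℝ L] [LieAlgebra.IsSemisimple ℝ L]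
    (p0 pinf : LieSubalgebra ℝ L) (h0 : IsH1Parabolic p0) (hinf : IsH1Parabolic pinf)
    (hc : ComplPair p0 pinf) (x : L) (hx : x ∈ killingPolar pinf) :
    -- `ad x` is nilpotent with cube zero
    (ad ℝ L x) ^ 3 = 0 ∧
    -- `𝔭∞` is always contained in `ker (ad x)²`
    pinf.toSubmodule ≤ LinearMap.ker ((ad ℝ L x) ^ 2) ∧
    -- `exp(ad x)(𝔭₀)` is a height-one parabolic subalgebra, complementary to `𝔭₀`
    -- and `𝔭∞` precisely when `ker (ad x)² = 𝔭∞`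
    (∃ p1 : LieSubalgebra ℝ L, (p1 : Set L) = expAd x '' (p0 : Set L) ∧
      IsH1Parabolic p1 ∧
      ((ComplPair p1 p0 ∧ ComplPair p1 pinf) ↔
        LinearMap.ker ((ad ℝ L x) ^ 2) = pinf.toSubmodule)) := by
  classical
  have h3 : (ad ℝ L x) ^ 3 = 0 := cube_ad pinf hinf hx
  have A3 : ∀ g : L, ⁅x, ⁅x, ⁅x, g⁆⁆⁆ = 0 := cube_pointwise h3
  have hsqapp : ∀ g : L, ((ad ℝ L x) ^ 2) g = ⁅x, ⁅x, g⁆⁆ := by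
    intro g; simp [pow_succ, Module.End.mul_apply, ad_apply]
  have hsq0 : ∀ y ∈ pinf, ⁅x, ⁅x, y⁆⁆ = 0 := fun y hy => sq_ad_eq_zero pinf hinf hx hy
  have hker : pinf.toSubmodule ≤ LinearMap.ker ((ad ℝ L x) ^ 2) := by
    intro y hy
    rw [LinearMap.mem_ker, hsqapp]
    exact hsq0 y ((LieSubalgebra.mem_toSubmodule (L' := pinf)).mp hy)
  refine ⟨h3, hker, ?_⟩
  have hEapp : ∀ g : L, expAd x g = g + ⁅x, g⁆ + (2⁻¹ : ℝ) • ⁅x, ⁅x, g⁆⁆ := expAd_apply h3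
  have hMP0 : killingPolar p0 ≤ p0.toSubmodule := polar_le p0 pinf h0 hc.1 hc.2
  have hNPinf : killingPolar pinf ≤ pinf.toSubmodule := polar_le pinf p0 hinf hc.2 hc.1
  have hAN : ∀ u ∈ killingPolar pinf, ⁅x, u⁆ = 0 := hinf x hx
  have hAH : ∀ h ∈ pinf.toSubmodule, ⁅x, h⁆ ∈ killingPolar pinf := by
    intro h hh
    have h1 : ⁅h, x⁆ ∈ killingPolar pinf :=
      lie_mem_kp pinf ((LieSubalgebra.mem_toSubmodule (L' := pinf)).mp hh) hx
    rw [← lie_skew]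
    exact (killingPolar pinf).neg_mem h1
  have hA2N : ∀ g : L, ⁅x, ⁅x, g⁆⁆ ∈ killingPolar pinf := sq_ad_mem pinf hinf hx
  -- ⁅x, M⁆ ⊆ H
  have hAM : ∀ v ∈ killingPolar p0, ⁅x, v⁆ ∈ p0.toSubmodule ⊓ pinf.toSubmodule := by
    intro v hv
    have o1 : ∀ d ∈ killingPolar pinf, killingForm ℝ L ⁅x, v⁆ d = 0 := by
      intro d hd
      rw [kp_inv x v d, hAN d hd, map_zero, neg_zero]
    have o2 : ∀ d ∈ killingPolar p0, killingForm ℝ L ⁅x, v⁆ d = 0 := by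
      intro d hd
      rw [kp_inv' x v d, h0 v hv d hd, map_zero]
    exact Submodule.mem_inf.mpr
      ⟨mem_of_perp_polar p0 pinf h0 hc.1 hc.2 o2, mem_of_perp_polar pinf p0 hinf hc.2 hc.1 o1⟩
  -- decomposition g = v + h + u
  have dec : ∀ g : L, ∃ v ∈ killingPolar p0, ∃ h ∈ p0.toSubmodule ⊓ pinf.toSubmodule,
      ∃ u ∈ killingPolar pinf, g = v + h + u := by
    intro g
    have hgtop : g ∈ p0.toSubmodule ⊔ killingPolar pinf := by
      rw [hc.1.codisjoint.eq_top]; trivial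
    obtain ⟨a, ha, u, hu, hau⟩ := Submodule.mem_sup.mp hgtop
    have hatop : a ∈ pinf.toSubmodule ⊔ killingPolar p0 := by
      rw [hc.2.codisjoint.eq_top]; trivial
    obtain ⟨q, hq, v, hv, hqv⟩ := Submodule.mem_sup.mp hatop
    refine ⟨v, hv, q, Submodule.mem_inf.mpr ⟨?_, hq⟩, u, hu, ?_⟩
    · have : q = a - v := by rw [← hqv]; abel
      rw [this]
      exact Submodule.sub_mem _ ha (hMP0 hv)
    · rw [← hau, ← hqv]; abel
  -- uniqueness of the decomposition
  have uniq : ∀ v h u : L, v ∈ killingPolar p0 → h ∈ p0.toSubmodule ⊓ pinf.toSubmodule →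
      u ∈ killingPolar pinf → v + h + u = 0 → v = 0 ∧ h = 0 ∧ u = 0 := by
    intro v h u hv hh hu hsum
    have hv0 : v = 0 := by
      have hvm : v ∈ pinf.toSubmodule := by
        have hveq : v = -(h + u) := by
          have : v + (h + u) = 0 := by rw [← add_assoc]; exact hsum
          exact eq_neg_of_add_eq_zero_left this
        rw [hveq]
        exact Submodule.neg_mem _ (Submodule.add_mem _ (Submodule.mem_inf.mp hh).2 (hNPinf hu))
      exact Submodule.disjoint_def.mp hc.2.disjoint v hvm hv
    have hh0 : h = 0 := by
      have hhm : h ∈ killingPolar pinf := by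
        have hheq : h = -u := by
          have : h + u = 0 := by rw [hv0] at hsum; simpa using hsum
          exact eq_neg_of_add_eq_zero_left this
        rw [hheq]
        exact Submodule.neg_mem _ hu
      exact Submodule.disjoint_def.mp hc.1.disjoint h (Submodule.mem_inf.mp hh).1 hhm
    refine ⟨hv0, hh0, ?_⟩
    rw [hv0, hh0] at hsum
    simpa using hsum
  -- decompositions within p0 and pinf
  have decP0 : ∀ p ∈ p0.toSubmodule, ∃ v ∈ killingPolar p0,
      ∃ h ∈ p0.toSubmodule ⊓ pinf.toSubmodule, p = v + h := by
    intro p hp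
    obtain ⟨v, hv, h, hh, u, hu, hdec⟩ := dec p
    have hu0 : u = 0 := by
      have hum : u ∈ p0.toSubmodule := by
        have hueq : u = p - v - h := by rw [hdec]; abel
        rw [hueq]
        exact Submodule.sub_mem _ (Submodule.sub_mem _ hp (hMP0 hv)) (Submodule.mem_inf.mp hh).1
      exact Submodule.disjoint_def.mp hc.1.disjoint u hum hu
    exact ⟨v, hv, h, hh, by rw [hdec, hu0, add_zero]⟩
  have decPinf : ∀ p ∈ pinf.toSubmodule, ∃ h ∈ p0.toSubmodule ⊓ pinf.toSubmodule,
      ∃ u ∈ killingPolar pinf, p = h + u := by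
    intro p hp
    obtain ⟨v, hv, h, hh, u, hu, hdec⟩ := dec p
    have hv0 : v = 0 := by
      have hvm : v ∈ pinf.toSubmodule := by
        have hveq : v = p - h - u := by rw [hdec]; abel
        rw [hveq]
        exact Submodule.sub_mem _ (Submodule.sub_mem _ hp (Submodule.mem_inf.mp hh).2) (hNPinf hu)
      exact Submodule.disjoint_def.mp hc.2.disjoint v hvm hv
    exact ⟨h, hh, u, hu, by rw [hdec, hv0, zero_add]⟩
  -- the image formula for elements of p0
  have Ecomp : ∀ v h : L, v ∈ killingPolar p0 → h ∈ p0.toSubmodule ⊓ pinf.toSubmodule →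
      expAd x (v + h) = v + (h + ⁅x, v⁆) + (⁅x, h⁆ + (2⁻¹ : ℝ) • ⁅x, ⁅x, v⁆⁆) := by
    intro v h hv hh
    have hxh : ⁅x, ⁅x, h⁆⁆ = 0 := hAN _ (hAH h (Submodule.mem_inf.mp hh).2)
    rw [hEapp (v + h), lie_add, lie_add, hxh, add_zero]
    module
  -- construct p1
  have hlie_mem : ∀ {y z : L}, y ∈ (p0.toSubmodule).map (expAd x) →
      z ∈ (p0.toSubmodule).map (expAd x) → ⁅y, z⁆ ∈ (p0.toSubmodule).map (expAd x) := by
    intro y z hy hz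
    obtain ⟨a, ha, rfl⟩ := Submodule.mem_map.mp hy
    obtain ⟨b, hb, rfl⟩ := Submodule.mem_map.mp hz
    exact Submodule.mem_map.mpr ⟨⁅a, b⁆,
      (LieSubalgebra.mem_toSubmodule (L' := p0)).mpr
        (p0.lie_mem ((LieSubalgebra.mem_toSubmodule (L' := p0)).mp ha)
          ((LieSubalgebra.mem_toSubmodule (L' := p0)).mp hb)),
      expAd_lie h3 a b⟩
  set p1 : LieSubalgebra ℝ L :=
    { toSubmodule := (p0.toSubmodule).map (expAd x)
      lie_mem' := hlie_mem } with hp1def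
  have hp1sub : p1.toSubmodule = (p0.toSubmodule).map (expAd x) := rfl
  have hp1mem : ∀ {z : L}, z ∈ p1 ↔ ∃ a ∈ p0.toSubmodule, expAd x a = z := by
    intro z
    exact Submodule.mem_map
  have hpol : killingPolar p1 = (killingPolar p0).map (expAd x) := by
    apply le_antisymm
    · intro z hz
      refine Submodule.mem_map.mpr
        ⟨z - ⁅x, z⁆ + (2⁻¹ : ℝ) • ⁅x, ⁅x, z⁆⁆, ?_, expAd_leftinv h3 z⟩
      intro y hy
      have h1 : killingForm ℝ L
          (expAd x (z - ⁅x, z⁆ + (2⁻¹ : ℝ) • ⁅x, ⁅x, z⁆⁆)) (expAd x y) = 0 := by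
        rw [expAd_leftinv h3 z]
        exact hz _ (hp1mem.mpr ⟨y, (LieSubalgebra.mem_toSubmodule (L' := p0)).mpr hy, rfl⟩)
      rw [expAd_killing h3] at h1
      exact h1
    · intro z hz
      obtain ⟨w, hw, rfl⟩ := Submodule.mem_map.mp hz
      intro y hy
      obtain ⟨a, ha, rfl⟩ := hp1mem.mp hy
      rw [expAd_killing h3]
      exact hw a ((LieSubalgebra.mem_toSubmodule (L' := p0)).mp ha)
  refine ⟨p1, ?_, ?_, ?_⟩
  · -- carrier equality
    ext z
    constructor
    · intro hzp1
      obtain ⟨a, ha, rfl⟩ := hp1mem.mp hzp1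
      exact ⟨a, (LieSubalgebra.mem_toSubmodule (L' := p0)).mp ha, rfl⟩
    · rintro ⟨a, ha, rfl⟩
      exact hp1mem.mpr ⟨a, (LieSubalgebra.mem_toSubmodule (L' := p0)).mpr ha, rfl⟩
  · -- IsH1Parabolic p1
    intro z hz z' hz'
    rw [hpol] at hz hz'
    obtain ⟨w, hw, rfl⟩ := Submodule.mem_map.mp hz
    obtain ⟨w', hw', rfl⟩ := Submodule.mem_map.mp hz'
    rw [← expAd_lie h3, h0 w hw w' hw', map_zero]
  · -- the iff
    constructor
    · -- forward direction
      rintro ⟨hcp1, _⟩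
      apply le_antisymm _ hker
      intro g hg
      obtain ⟨v, hv, h, hh, u, hu, rfl⟩ := dec g
      have hxh : ⁅x, ⁅x, h⁆⁆ = 0 := hAN _ (hAH h (Submodule.mem_inf.mp hh).2)
      have hxu : ⁅x, u⁆ = 0 := hAN u hu
      have hA2g : ⁅x, ⁅x, v⁆⁆ = 0 := by
        have hg2 : ⁅x, ⁅x, v + h + u⁆⁆ = 0 := by
          have hg3 := LinearMap.mem_ker.mp hg
          rwa [hsqapp] at hg3
        simp only [lie_add, hxh, hxu, lie_zero, add_zero] at hg2
        exact hg2
      have hv' : expAd x (v - ⁅x, v⁆) = v := by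
        rw [hEapp]
        have e1 : ⁅x, v - ⁅x, v⁆⁆ = ⁅x, v⁆ := by rw [lie_sub, hA2g, sub_zero]
        rw [e1, hA2g, smul_zero, add_zero]
        abel
      have hvmem : v ∈ p1.toSubmodule := by
        rw [hp1sub]
        exact Submodule.mem_map.mpr ⟨v - ⁅x, v⁆,
          Submodule.sub_mem _ (hMP0 hv) (Submodule.mem_inf.mp (hAM v hv)).1, hv'⟩
      have hv0 : v = 0 := Submodule.disjoint_def.mp hcp1.1.disjoint v hvmem hv
      rw [hv0, zero_add]
      exact Submodule.add_mem _ (Submodule.mem_inf.mp hh).2 (hNPinf hu)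
    · -- backward direction
      intro hK
      have hinj : ∀ v ∈ killingPolar p0, ⁅x, ⁅x, v⁆⁆ = 0 → v = 0 := by
        intro v hv hv2
        have hm : v ∈ LinearMap.ker ((ad ℝ L x) ^ 2) := by
          rw [LinearMap.mem_ker, hsqapp]; exact hv2
        rw [hK] at hm
        exact Submodule.disjoint_def.mp hc.2.disjoint v hm hv
      -- equality of dimensions of the polars
      have hMleN : finrank ℝ (killingPolar p0) ≤ finrank ℝ (killingPolar pinf) := by
        have hφ : Function.Injective ((killingPolar pinf).subtype.dualMap ∘ₗ
            (killingForm ℝ L ∘ₗ (killingPolar p0).subtype)) := by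
          rw [← LinearMap.ker_eq_bot, eq_bot_iff]
          intro v hv
          have hv' : ∀ u : (killingPolar pinf), killingForm ℝ L (v : L) (u : L) = 0 := by
            intro u
            have h9 := LinearMap.congr_fun (LinearMap.mem_ker.mp hv) u
            simpa using h9
          have hz : (v : L) = 0 := by
            apply kp_nondeg p0 h0
            intro w
            have hwtop : w ∈ p0.toSubmodule ⊔ killingPolar pinf := by
              rw [hc.1.codisjoint.eq_top]; trivial
            obtain ⟨a, ha, u, hu, hw⟩ := Submodule.mem_sup.mp hwtop
            have e1 : killingForm ℝ L (v : L) a = 0 :=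
              v.2 a ((LieSubalgebra.mem_toSubmodule (L' := p0)).mp ha)
            have e2 : killingForm ℝ L (v : L) u = 0 := hv' ⟨u, hu⟩
            rw [← hw, map_add, e1, e2, add_zero]
          simpa using hz
        calc finrank ℝ (killingPolar p0)
            ≤ finrank ℝ (Module.Dual ℝ (killingPolar pinf)) :=
              LinearMap.finrank_le_finrank_of_injective hφ
          _ = finrank ℝ (killingPolar pinf) := Subspace.dual_finrank_eq
      have hNleM : finrank ℝ (killingPolar pinf) ≤ finrank ℝ (killingPolar p0) := by
        have hφ : Function.Injective ((killingPolar p0).subtype.dualMap ∘ₗ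
            (killingForm ℝ L ∘ₗ (killingPolar pinf).subtype)) := by
          rw [← LinearMap.ker_eq_bot, eq_bot_iff]
          intro v hv
          have hv' : ∀ u : (killingPolar p0), killingForm ℝ L (v : L) (u : L) = 0 := by
            intro u
            have h9 := LinearMap.congr_fun (LinearMap.mem_ker.mp hv) u
            simpa using h9
          have hz : (v : L) = 0 := by
            apply kp_nondeg p0 h0
            intro w
            have hwtop : w ∈ pinf.toSubmodule ⊔ killingPolar p0 := by
              rw [hc.2.codisjoint.eq_top]; trivial
            obtain ⟨a, ha, u, hu, hw⟩ := Submodule.mem_sup.mp hwtop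
            have e1 : killingForm ℝ L (v : L) a = 0 :=
              v.2 a ((LieSubalgebra.mem_toSubmodule (L' := pinf)).mp ha)
            have e2 : killingForm ℝ L (v : L) u = 0 := hv' ⟨u, hu⟩
            rw [← hw, map_add, e1, e2, add_zero]
          simpa using hz
        calc finrank ℝ (killingPolar pinf)
            ≤ finrank ℝ (Module.Dual ℝ (killingPolar p0)) :=
              LinearMap.finrank_le_finrank_of_injective hφ
          _ = finrank ℝ (killingPolar p0) := Subspace.dual_finrank_eq
      have hrange : LinearMap.range ((ad ℝ L x) ^ 2) = killingPolar pinf := by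
        apply Submodule.eq_of_le_of_finrank_eq
        · rintro z ⟨g, rfl⟩
          rw [hsqapp g]
          exact hA2N g
        · have r1 := LinearMap.finrank_range_add_finrank_ker ((ad ℝ L x) ^ 2)
          rw [hK] at r1
          have r2 := Submodule.finrank_add_eq_of_isCompl hc.2
          omega
      have hsurj : ∀ u ∈ killingPolar pinf, ∃ v ∈ killingPolar p0, ⁅x, ⁅x, v⁆⁆ = u := by
        intro u hu
        have hur : u ∈ LinearMap.range ((ad ℝ L x) ^ 2) := by rw [hrange]; exact hu
        obtain ⟨g, hg⟩ := hur
        obtain ⟨v, hv, h, hh, u', hu', rfl⟩ := dec g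
        refine ⟨v, hv, ?_⟩
        have hxh : ⁅x, ⁅x, h⁆⁆ = 0 := hAN _ (hAH h (Submodule.mem_inf.mp hh).2)
        have hxu : ⁅x, u'⁆ = 0 := hAN u' hu'
        rw [hsqapp] at hg
        simp only [lie_add, hxh, hxu, lie_zero, add_zero] at hg
        exact hg
      -- the four complementarity statements
      have c1 : IsCompl ((p0.toSubmodule).map (expAd x)) (killingPolar p0) := by
        constructor
        · rw [disjoint_iff, eq_bot_iff]
          intro z hz
          have hz1 := hz.1
          have hzM := hz.2
          obtain ⟨p, hp, rfl⟩ := Submodule.mem_map.mp hz1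
          obtain ⟨v, hv, h, hh, rfl⟩ := decP0 p hp
          have hEvh := Ecomp v h hv hh
          have hupn : (⁅x, h⁆ + (2⁻¹ : ℝ) • ⁅x, ⁅x, v⁆⁆) ∈ killingPolar pinf :=
            Submodule.add_mem _ (hAH h (Submodule.mem_inf.mp hh).2)
              (Submodule.smul_mem _ _ (hA2N v))
          have hhh : (h + ⁅x, v⁆) ∈ p0.toSubmodule ⊓ pinf.toSubmodule :=
            Submodule.add_mem _ hh (hAM v hv)
          have hsum : (v - expAd x (v + h)) + (h + ⁅x, v⁆)
              + (⁅x, h⁆ + (2⁻¹ : ℝ) • ⁅x, ⁅x, v⁆⁆) = 0 := by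
            rw [hEvh]; abel
          obtain ⟨q1, q2, q3⟩ :=
            uniq _ _ _ (Submodule.sub_mem _ hv hzM) hhh hupn hsum
          have hAv : ⁅x, h⁆ = -⁅x, ⁅x, v⁆⁆ := by
            have hq2 : h = -⁅x, v⁆ := eq_neg_of_add_eq_zero_left q2
            rw [hq2, lie_neg]
          have hA2v0 : ⁅x, ⁅x, v⁆⁆ = 0 := by
            have hc0 : ((2⁻¹ : ℝ) - 1) • ⁅x, ⁅x, v⁆⁆ = 0 := by
              rw [sub_smul, one_smul]
              rw [hAv] at q3
              calc ((2⁻¹ : ℝ)) • ⁅x, ⁅x, v⁆⁆ - ⁅x, ⁅x, v⁆⁆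
                  = -⁅x, ⁅x, v⁆⁆ + (2⁻¹ : ℝ) • ⁅x, ⁅x, v⁆⁆ := by abel
                _ = 0 := q3
            rcases smul_eq_zero.mp hc0 with hcc | hcc
            · norm_num at hcc
            · exact hcc
          have hv0 : v = 0 := hinj v hv hA2v0
          have hh0 : h = 0 := by
            rw [hv0, lie_zero, add_zero] at q2
            exact q2
          show expAd x (v + h) ∈ (⊥ : Submodule ℝ L)
          rw [hv0, hh0, add_zero, map_zero]
          exact Submodule.zero_mem _
        · rw [codisjoint_iff, eq_top_iff]
          intro g _
          obtain ⟨v, hv, h, hh, u, hu, rfl⟩ := dec g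
          obtain ⟨v₀, hv₀, hveq⟩ := hsurj ((2 : ℝ) • (⁅x, h⁆ - u))
            (Submodule.smul_mem _ _
              (Submodule.sub_mem _ (hAH h (Submodule.mem_inf.mp hh).2) hu))
          have hhm : h - ⁅x, v₀⁆ ∈ p0.toSubmodule ⊓ pinf.toSubmodule :=
            Submodule.sub_mem _ hh (hAM v₀ hv₀)
          have hEp := Ecomp v₀ (h - ⁅x, v₀⁆) hv₀ hhm
          refine Submodule.mem_sup.mpr ⟨expAd x (v₀ + (h - ⁅x, v₀⁆)),
            Submodule.mem_map_of_mem
              (Submodule.add_mem _ (hMP0 hv₀) (Submodule.mem_inf.mp hhm).1),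
            v - v₀, Submodule.sub_mem _ hv hv₀, ?_⟩
          rw [hEp, lie_sub, hveq]
          module
      have c2 : IsCompl p0.toSubmodule ((killingPolar p0).map (expAd x)) := by
        constructor
        · rw [disjoint_iff, eq_bot_iff]
          intro z hz
          have hz0 := hz.1
          obtain ⟨w, hw, rfl⟩ := Submodule.mem_map.mp hz.2
          obtain ⟨v', hv', h', hh', hzd⟩ := decP0 _ hz0
          have hsum : (w - v') + (⁅x, w⁆ - h') + (2⁻¹ : ℝ) • ⁅x, ⁅x, w⁆⁆ = 0 := by
            have hEw := hEapp w
            have : expAd x w = v' + h' := hzd.symm ▸ rfl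
            rw [hEw] at this
            calc (w - v') + (⁅x, w⁆ - h') + (2⁻¹ : ℝ) • ⁅x, ⁅x, w⁆⁆
                = (w + ⁅x, w⁆ + (2⁻¹ : ℝ) • ⁅x, ⁅x, w⁆⁆) - (v' + h') := by abel
              _ = 0 := by rw [← this]; abel
          obtain ⟨q1, q2, q3⟩ := uniq _ _ _ (Submodule.sub_mem _ hw hv')
            (Submodule.sub_mem _ (hAM w hw) hh')
            (Submodule.smul_mem _ _ (hA2N w)) hsum
          have hA2w : ⁅x, ⁅x, w⁆⁆ = 0 := by
            rcases smul_eq_zero.mp q3 with hcc | hcc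
            · norm_num at hcc
            · exact hcc
          have hw0 : w = 0 := hinj w hw hA2w
          show expAd x w ∈ (⊥ : Submodule ℝ L)
          rw [hw0, map_zero]
          exact Submodule.zero_mem _
        · rw [codisjoint_iff, eq_top_iff]
          intro g _
          obtain ⟨v, hv, h, hh, u, hu, rfl⟩ := dec g
          obtain ⟨v₀, hv₀, hveq⟩ := hsurj ((2 : ℝ) • u) (Submodule.smul_mem _ _ hu)
          refine Submodule.mem_sup.mpr ⟨(v - v₀) + (h - ⁅x, v₀⁆),
            Submodule.add_mem _ (Submodule.sub_mem _ (hMP0 hv) (hMP0 hv₀))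
              (Submodule.sub_mem _ (Submodule.mem_inf.mp hh).1
                (Submodule.mem_inf.mp (hAM v₀ hv₀)).1),
            expAd x v₀, Submodule.mem_map_of_mem hv₀, ?_⟩
          rw [hEapp v₀, hveq]
          module
      have c3 : IsCompl ((p0.toSubmodule).map (expAd x)) (killingPolar pinf) := by
        constructor
        · rw [disjoint_iff, eq_bot_iff]
          intro z hz
          obtain ⟨p, hp, rfl⟩ := Submodule.mem_map.mp hz.1
          have hzN := hz.2
          obtain ⟨v, hv, h, hh, rfl⟩ := decP0 p hp
          have hEvh := Ecomp v h hv hh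
          have hupn : (⁅x, h⁆ + (2⁻¹ : ℝ) • ⁅x, ⁅x, v⁆⁆ - expAd x (v + h))
              ∈ killingPolar pinf :=
            Submodule.sub_mem _ (Submodule.add_mem _ (hAH h (Submodule.mem_inf.mp hh).2)
              (Submodule.smul_mem _ _ (hA2N v))) hzN
          have hhh : (h + ⁅x, v⁆) ∈ p0.toSubmodule ⊓ pinf.toSubmodule :=
            Submodule.add_mem _ hh (hAM v hv)
          have hsum : v + (h + ⁅x, v⁆)
              + (⁅x, h⁆ + (2⁻¹ : ℝ) • ⁅x, ⁅x, v⁆⁆ - expAd x (v + h)) = 0 := by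
            rw [hEvh]; abel
          obtain ⟨q1, q2, q3⟩ := uniq _ _ _ hv hhh hupn hsum
          show expAd x (v + h) ∈ (⊥ : Submodule ℝ L)
          have hh0 : h = 0 := by
            rw [q1, lie_zero, add_zero] at q2
            exact q2
          rw [q1, hh0, add_zero, map_zero]
          exact Submodule.zero_mem _
        · rw [codisjoint_iff, eq_top_iff]
          intro g _
          obtain ⟨v, hv, h, hh, u, hu, rfl⟩ := dec g
          have hhm : h - ⁅x, v⁆ ∈ p0.toSubmodule ⊓ pinf.toSubmodule :=
            Submodule.sub_mem _ hh (hAM v hv)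
          have hEp := Ecomp v (h - ⁅x, v⁆) hv hhm
          refine Submodule.mem_sup.mpr ⟨expAd x (v + (h - ⁅x, v⁆)),
            Submodule.mem_map_of_mem
              (Submodule.add_mem _ (hMP0 hv) (Submodule.mem_inf.mp hhm).1),
            u - (⁅x, h - ⁅x, v⁆⁆ + (2⁻¹ : ℝ) • ⁅x, ⁅x, v⁆⁆),
            Submodule.sub_mem _ hu (Submodule.add_mem _ (hAH _ (Submodule.mem_inf.mp hhm).2)
              (Submodule.smul_mem _ _ (hA2N v))), ?_⟩
          rw [hEp]
          module
      have c4 : IsCompl pinf.toSubmodule ((killingPolar p0).map (expAd x)) := by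
        constructor
        · rw [disjoint_iff, eq_bot_iff]
          intro z hz
          have hzinf := hz.1
          obtain ⟨w, hw, rfl⟩ := Submodule.mem_map.mp hz.2
          obtain ⟨h', hh', u', hu', hzd⟩ := decPinf _ hzinf
          have hsum : w + (⁅x, w⁆ - h') + ((2⁻¹ : ℝ) • ⁅x, ⁅x, w⁆⁆ - u') = 0 := by
            have hEw := hEapp w
            have hzz : expAd x w = h' + u' := hzd.symm ▸ rfl
            rw [hEw] at hzz
            calc w + (⁅x, w⁆ - h') + ((2⁻¹ : ℝ) • ⁅x, ⁅x, w⁆⁆ - u')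
                = (w + ⁅x, w⁆ + (2⁻¹ : ℝ) • ⁅x, ⁅x, w⁆⁆) - (h' + u') := by abel
              _ = 0 := by rw [← hzz]; abel
          obtain ⟨q1, q2, q3⟩ := uniq _ _ _ hw
            (Submodule.sub_mem _ (hAM w hw) hh')
            (Submodule.sub_mem _ (Submodule.smul_mem _ _ (hA2N w)) hu') hsum
          show expAd x w ∈ (⊥ : Submodule ℝ L)
          rw [q1, map_zero]
          exact Submodule.zero_mem _
        · rw [codisjoint_iff, eq_top_iff]
          intro g _
          obtain ⟨v, hv, h, hh, u, hu, rfl⟩ := dec g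
          refine Submodule.mem_sup.mpr ⟨(h - ⁅x, v⁆) + (u - (2⁻¹ : ℝ) • ⁅x, ⁅x, v⁆⁆),
            Submodule.add_mem _
              (Submodule.sub_mem _ (Submodule.mem_inf.mp hh).2
                (Submodule.mem_inf.mp (hAM v hv)).2)
              (Submodule.sub_mem _ (hNPinf hu)
                (hNPinf (Submodule.smul_mem _ _ (hA2N v)))),
            expAd x v, Submodule.mem_map_of_mem hv, ?_⟩
          rw [hEapp v]
          module
      constructor
      · exact ⟨c1, by rw [hpol]; exact c2⟩
      · exact ⟨c3, by rw [hpol]; exact c4⟩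
end

section
/- Let 𝔤 be a finite-dimensional real semisimple Lie algebra, let (𝔭, 𝔮) and (𝔭′, 𝔮′) be complementary pairs of height-one parabolic subalgebras of 𝔤, and suppose there is a Lie algebra automorphism h of 𝔤 with h(𝔭) = 𝔭′. Then there exists a Lie algebra automorphism g of 𝔤 with g(𝔭) = 𝔭′ and g(𝔮) = 𝔮′; indeed g may be taken of the form h ∘ exp(ad x) for some x ∈ 𝔭^⊥. (Thus the adjoint group acts transitively on the space Z of complementary pairs.) -/
open LieAlgebra Module

variable {L : Type*} [LieRing L] [LieAlgebra ℝ L]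

namespace PCaux

lemma mem_killingPolar {p : LieSubalgebra ℝ L} {x : L} :
    x ∈ killingPolar p ↔ ∀ y ∈ p, killingForm ℝ L x y = 0 := Iff.rfl

lemma killingPolar_eq_orthogonal (p : LieSubalgebra ℝ L) :
    killingPolar p = (killingForm ℝ L).orthogonal p.toSubmodule := by
  ext x
  constructor
  · intro hx y hy
    show killingForm ℝ L y x = 0
    exact LieModule.traceForm_comm ℝ L L y x ▸ hx y hy
  · intro hx y hy
    have : killingForm ℝ L y x = 0 := hx y hy
    exact LieModule.traceForm_comm ℝ L L x y ▸ this

/-- From any height-one parabolic, semisimplicity upgrades to a nondegenerate Killing form. -/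
lemma isKilling [FiniteDimensional ℝ L] [LieAlgebra.IsSemisimple ℝ L]
    (p : LieSubalgebra ℝ L) (hp : IsH1Parabolic p) : LieAlgebra.IsKilling ℝ L := by
  constructor
  have habel : IsLieAbelian (LieIdeal.killingCompl ℝ L ⊤) := by
    constructor
    rintro ⟨a, ha⟩ ⟨b, hb⟩
    have key : ∀ c ∈ LieIdeal.killingCompl ℝ L ⊤, c ∈ killingPolar p := by
      intro c hc y hy
      have := (LieIdeal.mem_killingCompl ℝ L ⊤).mp hc y trivial
      exact LieModule.traceForm_comm ℝ L L y c ▸ this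
    exact Subtype.ext (hp a (key a ha) b (key b hb))
  exact (LieAlgebra.hasTrivialRadical_iff_no_abelian_ideals ℝ L).mp inferInstance _ habel

section Killing

variable [FiniteDimensional ℝ L] [LieAlgebra.IsKilling ℝ L]

lemma orthogonal_killingPolar (p : LieSubalgebra ℝ L) :
    (killingForm ℝ L).orthogonal (killingPolar p) = p.toSubmodule := by
  rw [killingPolar_eq_orthogonal]
  exact LinearMap.BilinForm.orthogonal_orthogonal
    (LieAlgebra.IsKilling.killingForm_nondegenerate ℝ L)
    (LieModule.traceForm_isSymm ℝ L L).isRefl _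

lemma mem_of_forall_polar {p : LieSubalgebra ℝ L} {v : L}
    (hv : ∀ z ∈ killingPolar p, killingForm ℝ L z v = 0) : v ∈ p := by
  have : v ∈ (killingForm ℝ L).orthogonal (killingPolar p) := fun z hz => hv z hz
  rwa [orthogonal_killingPolar] at this

omit [FiniteDimensional ℝ L] [LieAlgebra.IsKilling ℝ L] in
/-- `[𝔭^⊥, 𝔭] ⊆ 𝔭^⊥`. -/
lemma lie_polar_self {p : LieSubalgebra ℝ L} {x a : L}
    (hx : x ∈ killingPolar p) (ha : a ∈ p) : ⁅x, a⁆ ∈ killingPolar p := by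
  intro y hy
  rw [LieModule.traceForm_apply_lie_apply]
  exact hx _ (p.lie_mem ha hy)

/-- `[𝔭^⊥, 𝔤] ⊆ 𝔭` when `𝔭^⊥` is abelian. -/
lemma lie_polar_mem {p : LieSubalgebra ℝ L} (hp : IsH1Parabolic p) {x : L}
    (hx : x ∈ killingPolar p) (v : L) : ⁅x, v⁆ ∈ p := by
  apply mem_of_forall_polar
  intro z hz
  rw [← LieModule.traceForm_apply_lie_apply ℝ L L z x v]
  have hz0 : ⁅z, x⁆ = 0 := hp z hz x hx
  rw [hz0]
  simp

/-- `κ` vanishes on `𝔭^⊥ × 𝔭^⊥`. -/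
lemma polar_isotropic {p : LieSubalgebra ℝ L} (hp : IsH1Parabolic p) {x y : L}
    (hx : x ∈ killingPolar p) (hy : y ∈ killingPolar p) : killingForm ℝ L x y = 0 := by
  have hnil : IsNilpotent (ad ℝ L x ∘ₗ ad ℝ L y) := by
    refine ⟨2, ?_⟩
    ext v
    have h1 : ⁅y, v⁆ ∈ p := lie_polar_mem hp hy v
    have h2 : ⁅x, ⁅y, v⁆⁆ ∈ killingPolar p := lie_polar_self hx h1
    have h3 : ⁅y, ⁅x, ⁅y, v⁆⁆⁆ = 0 := hp y hy _ h2
    simp [pow_succ, Module.End.mul_apply, h3]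
  rw [killingForm_apply_apply]
  exact (LinearMap.isNilpotent_trace_of_isNilpotent hnil).eq_zero

lemma polar_le {p : LieSubalgebra ℝ L} (hp : IsH1Parabolic p) :
    killingPolar p ≤ p.toSubmodule := by
  intro x hx
  exact mem_of_forall_polar fun z hz => polar_isotropic hp hz hx

lemma ad_cube {p : LieSubalgebra ℝ L} (hp : IsH1Parabolic p) {x : L}
    (hx : x ∈ killingPolar p) : (ad ℝ L x) ^ 3 = 0 := by
  ext v
  have h1 : ⁅x, v⁆ ∈ p := lie_polar_mem hp hx v
  have h2 : ⁅x, ⁅x, v⁆⁆ ∈ killingPolar p := lie_polar_self hx h1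
  have h3 : ⁅x, ⁅x, ⁅x, v⁆⁆⁆ = 0 := hp x hx _ h2
  simp [pow_succ, Module.End.mul_apply, h3]

end Killing
section ExpAd

variable [FiniteDimensional ℝ L]

lemma pow_finrank_eq_zero {N : Module.End ℝ L} (h : IsNilpotent N) :
    N ^ finrank ℝ L = 0 := by
  have h1 := h.charpoly_eq_X_pow_finrank
  have h2 := LinearMap.aeval_self_charpoly N
  rw [h1] at h2
  simpa using h2

lemma expAd_eq {x : L} (hx3 : (ad ℝ L x) ^ 3 = 0) :
    expAd x = 1 + ad ℝ L x + (2 : ℝ)⁻¹ • (ad ℝ L x) ^ 2 := by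
  have h3 : ∀ k, 3 ≤ k → (ad ℝ L x) ^ k = 0 := fun k hk => by
    rw [show k = 3 + (k - 3) by omega, pow_add, hx3, zero_mul]
  have hd : ∀ k, finrank ℝ L + 1 ≤ k → (ad ℝ L x) ^ k = 0 := fun k hk => by
    have h0 : (ad ℝ L x) ^ finrank ℝ L = 0 := pow_finrank_eq_zero ⟨3, hx3⟩
    rw [show k = finrank ℝ L + (k - finrank ℝ L) by omega, pow_add, h0, zero_mul]
  have e1 : expAd x
      = ∑ k ∈ Finset.range (max (finrank ℝ L + 1) 3), (k.factorial : ℝ)⁻¹ • (ad ℝ L x) ^ k :=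
    Finset.sum_subset (Finset.range_subset_range.mpr (le_max_left _ _))
      (fun k _ hk' => by
        rw [hd k (by simp only [Finset.mem_range, not_lt] at hk'; omega), smul_zero])
  have e2 : (∑ k ∈ Finset.range 3, (k.factorial : ℝ)⁻¹ • (ad ℝ L x) ^ k)
      = ∑ k ∈ Finset.range (max (finrank ℝ L + 1) 3), (k.factorial : ℝ)⁻¹ • (ad ℝ L x) ^ k :=
    Finset.sum_subset (Finset.range_subset_range.mpr (le_max_right _ _))
      (fun k _ hk' => by
        rw [h3 k (by simp only [Finset.mem_range, not_lt] at hk'; omega), smul_zero])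
  rw [e1, ← e2, Finset.sum_range_succ, Finset.sum_range_succ, Finset.sum_range_one]
  norm_num [Nat.factorial]

lemma expAd_apply {x : L} (hx3 : (ad ℝ L x) ^ 3 = 0) (v : L) :
    expAd x v = v + ⁅x, v⁆ + (2 : ℝ)⁻¹ • ⁅x, ⁅x, v⁆⁆ := by
  rw [expAd_eq hx3]
  simp [pow_two, Module.End.mul_apply]

lemma ad_cube_apply {x : L} (hx3 : (ad ℝ L x) ^ 3 = 0) (v : L) :
    ⁅x, ⁅x, ⁅x, v⁆⁆⁆ = 0 := by
  have := congrFun (congrArg DFunLike.coe hx3) v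
  simpa [pow_succ, Module.End.mul_apply] using this

lemma expAd_lie {x : L} (hx3 : (ad ℝ L x) ^ 3 = 0) (a b : L) :
    expAd x ⁅a, b⁆ = ⁅expAd x a, expAd x b⁆ := by
  have ha3 : ⁅x, ⁅x, ⁅x, a⁆⁆⁆ = 0 := ad_cube_apply hx3 a
  have hb3 : ⁅x, ⁅x, ⁅x, b⁆⁆⁆ = 0 := ad_cube_apply hx3 b
  have E1 : ⁅x, ⁅a, b⁆⁆ = ⁅⁅x, a⁆, b⁆ + ⁅a, ⁅x, b⁆⁆ := leibniz_lie x a b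
  have E2 : ⁅x, ⁅x, ⁅a, b⁆⁆⁆
      = (⁅⁅x, ⁅x, a⁆⁆, b⁆ + ⁅⁅x, a⁆, ⁅x, b⁆⁆) + (⁅⁅x, a⁆, ⁅x, b⁆⁆ + ⁅a, ⁅x, ⁅x, b⁆⁆⁆) := by
    rw [E1, lie_add, leibniz_lie x ⁅x, a⁆ b, leibniz_lie x a ⁅x, b⁆]
  have E3 : (0 : L)
      = (⁅⁅x, ⁅x, a⁆⁆, ⁅x, b⁆⁆ + ⁅⁅x, ⁅x, a⁆⁆, ⁅x, b⁆⁆ + ⁅⁅x, a⁆, ⁅x, ⁅x, b⁆⁆⁆)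
        + (⁅⁅x, ⁅x, a⁆⁆, ⁅x, b⁆⁆ + ⁅⁅x, a⁆, ⁅x, ⁅x, b⁆⁆⁆ + ⁅⁅x, a⁆, ⁅x, ⁅x, b⁆⁆⁆) := by
    have h := ad_cube_apply hx3 ⁅a, b⁆
    rw [E2, lie_add, lie_add, lie_add, leibniz_lie x ⁅x, ⁅x, a⁆⁆ b,
      leibniz_lie x ⁅x, a⁆ ⁅x, b⁆, leibniz_lie x a ⁅x, ⁅x, b⁆⁆, ha3, hb3, zero_lie, lie_zero] at h
    rw [← h]
    module
  have key1 : ⁅⁅x, ⁅x, a⁆⁆, ⁅x, b⁆⁆ = - ⁅⁅x, a⁆, ⁅x, ⁅x, b⁆⁆⁆ := by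
    have h3 : (3 : ℝ) • (⁅⁅x, ⁅x, a⁆⁆, ⁅x, b⁆⁆ + ⁅⁅x, a⁆, ⁅x, ⁅x, b⁆⁆⁆) = 0 := by
      rw [show (3 : ℝ) • (⁅⁅x, ⁅x, a⁆⁆, ⁅x, b⁆⁆ + ⁅⁅x, a⁆, ⁅x, ⁅x, b⁆⁆⁆)
        = (⁅⁅x, ⁅x, a⁆⁆, ⁅x, b⁆⁆ + ⁅⁅x, ⁅x, a⁆⁆, ⁅x, b⁆⁆ + ⁅⁅x, a⁆, ⁅x, ⁅x, b⁆⁆⁆)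
          + (⁅⁅x, ⁅x, a⁆⁆, ⁅x, b⁆⁆ + ⁅⁅x, a⁆, ⁅x, ⁅x, b⁆⁆⁆ + ⁅⁅x, a⁆, ⁅x, ⁅x, b⁆⁆⁆) by module]
      exact E3.symm
    have h0 := (smul_eq_zero.mp h3).resolve_left (by norm_num)
    exact eq_neg_of_add_eq_zero_left h0
  have key2 : ⁅⁅x, ⁅x, a⁆⁆, ⁅x, ⁅x, b⁆⁆⁆ = 0 := by
    have h := congrArg (fun t => ⁅x, t⁆) key1
    simp only [lie_neg] at h
    rw [leibniz_lie x ⁅x, ⁅x, a⁆⁆ ⁅x, b⁆, leibniz_lie x ⁅x, a⁆ ⁅x, ⁅x, b⁆⁆,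
      ha3, hb3, zero_lie, lie_zero] at h
    simp only [zero_add, add_zero] at h
    have h2 : (2 : ℝ) • ⁅⁅x, ⁅x, a⁆⁆, ⁅x, ⁅x, b⁆⁆⁆ = 0 := by
      rw [two_smul]
      nth_rewrite 1 [h]
      exact neg_add_cancel _
    exact (smul_eq_zero.mp h2).resolve_left (by norm_num)
  rw [expAd_apply hx3, expAd_apply hx3, expAd_apply hx3, E2, E1]
  simp only [lie_add, add_lie, lie_smul, smul_lie, smul_add, key2, key1]
  module

lemma expAd_neg_cube {x : L} (hx3 : (ad ℝ L x) ^ 3 = 0) : (ad ℝ L (-x)) ^ 3 = 0 := by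
  have hneg : ad ℝ L (-x) = - ad ℝ L x := by ext v; simp
  rw [hneg, Odd.neg_pow ⟨1, by norm_num⟩, hx3, neg_zero]

lemma expAd_cancel {x : L} (hx3 : (ad ℝ L x) ^ 3 = 0) (v : L) :
    expAd x (expAd (-x) v) = v := by
  rw [expAd_apply (expAd_neg_cube hx3), expAd_apply hx3]
  simp only [neg_lie, lie_neg, neg_neg, lie_add, lie_smul, smul_add, smul_neg,
    ad_cube_apply hx3 v, smul_zero, lie_zero, add_zero, neg_zero]
  have h4 : ⁅x, ⁅x, ⁅x, ⁅x, v⁆⁆⁆⁆ = 0 := by rw [ad_cube_apply hx3 v, lie_zero]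
  module

lemma expAd_bijective {x : L} (hx3 : (ad ℝ L x) ^ 3 = 0) :
    Function.Bijective (expAd x) := by
  have h1 : Function.LeftInverse (expAd (-x)) (expAd x) := fun v => by
    have := expAd_cancel (expAd_neg_cube hx3) v
    rwa [neg_neg] at this
  have h2 : Function.RightInverse (expAd (-x)) (expAd x) := fun v => expAd_cancel hx3 v
  exact ⟨h1.injective, h2.surjective⟩

lemma lieHom_pow_ad (h : L →ₗ⁅ℝ⁆ L) (x : L) : ∀ (k : ℕ) (w : L),
    h (((ad ℝ L x) ^ k) w) = ((ad ℝ L (h x)) ^ k) (h w) := by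
  intro k
  induction k with
  | zero => intro w; simp
  | succ k ih =>
    intro w
    rw [pow_succ, pow_succ]
    simp only [Module.End.mul_apply, ad_apply]
    rw [ih ⁅x, w⁆, LieHom.map_lie]

lemma lieHom_expAd (h : L →ₗ⁅ℝ⁆ L) (x v : L) :
    h (expAd x v) = expAd (h x) (h v) := by
  unfold expAd
  rw [LinearMap.sum_apply, LinearMap.sum_apply, ← LieHom.coe_toLinearMap, map_sum]
  refine Finset.sum_congr rfl fun k _ => ?_
  rw [LinearMap.smul_apply, LinearMap.smul_apply, map_smul, LieHom.coe_toLinearMap,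
    lieHom_pow_ad]

end ExpAd

section Grading

variable [FiniteDimensional ℝ L] [LieAlgebra.IsKilling ℝ L]
variable {P Q : LieSubalgebra ℝ L}

lemma decomp (hP : IsH1Parabolic P) (c : ComplPair P Q) (v : L) :
    ∃ a b cc : L, a ∈ killingPolar Q ∧ b ∈ P ∧ b ∈ Q ∧ cc ∈ killingPolar P ∧ v = a + b + cc := by
  have h1 : P.toSubmodule ⊔ killingPolar Q = ⊤ := c.1.codisjoint.eq_top
  have h2 : Q.toSubmodule ⊔ killingPolar P = ⊤ := c.2.codisjoint.eq_top
  obtain ⟨u, hu, a, ha, huv⟩ := Submodule.mem_sup.mp (h1 ▸ Submodule.mem_top : v ∈ _)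
  obtain ⟨b, hb, cc, hcc, hub⟩ := Submodule.mem_sup.mp (h2 ▸ Submodule.mem_top : u ∈ _)
  refine ⟨a, b, cc, ha, ?_, hb, hcc, by rw [← huv, ← hub]; abel⟩
  have : b = u - cc := by rw [← hub]; abel
  rw [this]
  exact sub_mem hu (polar_le hP hcc)

lemma indep (hP : IsH1Parabolic P) (c : ComplPair P Q) {a b cc : L}
    (ha : a ∈ killingPolar Q) (hbP : b ∈ P) (hbQ : b ∈ Q) (hcc : cc ∈ killingPolar P)
    (hsum : a + b + cc = 0) : a = 0 ∧ b = 0 ∧ cc = 0 := by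
  have ha0 : a = 0 := by
    have haP : a ∈ P.toSubmodule := by
      have : a = -(b + cc) := by rw [eq_neg_iff_add_eq_zero]; rw [← hsum]; abel
      rw [this]
      exact neg_mem (add_mem hbP (polar_le hP hcc))
    exact (Submodule.disjoint_def.mp c.1.disjoint) a haP ha
  have hb0 : b = 0 := by
    have hbp : b ∈ killingPolar P := by
      have : b = -cc := by rw [eq_neg_iff_add_eq_zero]; rw [← hsum, ha0]; abel
      rw [this]; exact neg_mem hcc
    exact (Submodule.disjoint_def.mp c.2.disjoint) b hbQ hbp
  refine ⟨ha0, hb0, ?_⟩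
  rw [ha0, hb0] at hsum; simpa using hsum

/-- Existence of the grading element of a complementary pair. -/
lemma exists_gradingElt (hP : IsH1Parabolic P) (hQ : IsH1Parabolic Q) (c : ComplPair P Q) :
    ∃ E : L, (E ∈ P ∧ E ∈ Q) ∧ (∀ v ∈ killingPolar P, ⁅E, v⁆ = v) ∧
      (∀ v, v ∈ P → v ∈ Q → ⁅E, v⁆ = 0) ∧ (∀ v ∈ killingPolar Q, ⁅E, v⁆ = -v) := by
  have hc1 : IsCompl (killingPolar P) Q.toSubmodule := c.2.symm
  have hc2 : IsCompl (killingPolar Q) P.toSubmodule := c.1.symm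
  set piP : L →ₗ[ℝ] L :=
    (killingPolar P).subtype ∘ₗ (killingPolar P).projectionOnto Q.toSubmodule hc1 with hpiP
  set piM : L →ₗ[ℝ] L :=
    (killingPolar Q).subtype ∘ₗ (killingPolar Q).projectionOnto P.toSubmodule hc2 with hpiM
  set D : L →ₗ[ℝ] L := piP - piM with hD
  have hvp : ∀ v ∈ killingPolar P, D v = v := by
    intro v hv
    have e1 : piP v = v := by
      simp only [hpiP, LinearMap.comp_apply]
      rw [show v = ((⟨v, hv⟩ : killingPolar P) : L) from rfl,
        Submodule.projectionOnto_apply_left hc1]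
      rfl
    have e2 : piM v = 0 := by
      simp only [hpiM, LinearMap.comp_apply]
      rw [Submodule.projectionOnto_apply_of_mem_right hc2 (polar_le hP hv)]
      simp
    simp [hD, LinearMap.sub_apply, e1, e2]
  have hvz : ∀ v, v ∈ P → v ∈ Q → D v = 0 := by
    intro v hvP hvQ
    have e1 : piP v = 0 := by
      simp only [hpiP, LinearMap.comp_apply]
      rw [Submodule.projectionOnto_apply_of_mem_right hc1 hvQ]; simp
    have e2 : piM v = 0 := by
      simp only [hpiM, LinearMap.comp_apply]
      rw [Submodule.projectionOnto_apply_of_mem_right hc2 hvP]; simp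
    simp [hD, LinearMap.sub_apply, e1, e2]
  have hvm : ∀ v ∈ killingPolar Q, D v = -v := by
    intro v hv
    have e1 : piP v = 0 := by
      simp only [hpiP, LinearMap.comp_apply]
      rw [Submodule.projectionOnto_apply_of_mem_right hc1 (polar_le hQ hv)]; simp
    have e2 : piM v = v := by
      simp only [hpiM, LinearMap.comp_apply]
      rw [show v = ((⟨v, hv⟩ : killingPolar Q) : L) from rfl,
        Submodule.projectionOnto_apply_left hc2]
      rfl
    simp [hD, LinearMap.sub_apply, e1, e2]
  have hLeib : ∀ u v : L, D ⁅u, v⁆ = ⁅D u, v⁆ + ⁅u, D v⁆ := by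
    intro u v
    obtain ⟨a, b, cc, ha, hbP, hbQ, hcc, rfl⟩ := decomp hP c u
    obtain ⟨a', b', cc', ha', hb'P, hb'Q, hcc', rfl⟩ := decomp hP c v
    have zaa : ⁅a, a'⁆ = (0 : L) := hQ a ha a' ha'
    have zcc : ⁅cc, cc'⁆ = (0 : L) := hP cc hcc cc' hcc'
    have hab' : D ⁅a, b'⁆ = -⁅a, b'⁆ := hvm _ (lie_polar_self ha hb'Q)
    have hba' : D ⁅b, a'⁆ = -⁅b, a'⁆ := by
      refine hvm _ ?_
      rw [← lie_skew]
      exact neg_mem (lie_polar_self ha' hbQ)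
    have hacc' : D ⁅a, cc'⁆ = 0 := by
      refine hvz _ ?_ (lie_polar_mem hQ ha cc')
      rw [← lie_skew]
      exact neg_mem (lie_polar_mem hP hcc' a)
    have hcca' : D ⁅cc, a'⁆ = 0 := by
      refine hvz _ (lie_polar_mem hP hcc a') ?_
      rw [← lie_skew]
      exact neg_mem (lie_polar_mem hQ ha' cc)
    have hbb' : D ⁅b, b'⁆ = 0 := hvz _ (P.lie_mem hbP hb'P) (Q.lie_mem hbQ hb'Q)
    have hbcc' : D ⁅b, cc'⁆ = ⁅b, cc'⁆ := by
      refine hvp _ ?_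
      rw [← lie_skew]
      exact neg_mem (lie_polar_self hcc' hbP)
    have hccb' : D ⁅cc, b'⁆ = ⁅cc, b'⁆ := hvp _ (lie_polar_self hcc hb'P)
    have Da : D a = -a := hvm a ha
    have Db : D b = 0 := hvz b hbP hbQ
    have Dcc : D cc = cc := hvp cc hcc
    have Da' : D a' = -a' := hvm a' ha'
    have Db' : D b' = 0 := hvz b' hb'P hb'Q
    have Dcc' : D cc' = cc' := hvp cc' hcc'
    simp only [lie_add, add_lie, map_add, zaa, zcc, map_zero, hab', hba', hacc', hcca', hbb',
      hbcc', hccb', Da, Db, Dcc, Da', Db', Dcc', zero_lie, lie_zero, neg_lie, lie_neg]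
    abel
  let Dder : LieDerivation ℝ L L :=
    { toLinearMap := D
      leibniz' := fun u v => by
        rw [hLeib u v, ← lie_skew (D u) v]
        abel }
  obtain ⟨E, hE⟩ := LieDerivation.IsKilling.exists_eq_ad Dder
  have hEv : ∀ v, ⁅E, v⁆ = D v := by
    intro v
    have h1 : (LieDerivation.ad ℝ L E) v = Dder v := by rw [hE]
    have h2 : (LieDerivation.ad ℝ L E) v = ⁅E, v⁆ := by
      rw [show ((LieDerivation.ad ℝ L E : LieDerivation ℝ L L) v : L)
        = (LieAlgebra.ad ℝ L E) v by rw [← LieDerivation.coe_ad_apply_eq_ad_apply]; rfl]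
      simp
    rw [← h2, h1]; rfl
  have hDE : D E = 0 := by rw [← hEv E]; simp
  obtain ⟨a, b, cc, ha, hbP, hbQ, hcc, hEsum⟩ := decomp hP c E
  have hsum : (-a) + 0 + cc = 0 := by
    have : D E = -a + 0 + cc := by
      rw [hEsum, map_add, map_add, hvm a ha, hvz b hbP hbQ, hvp cc hcc]
    rw [← this, hDE]
  obtain ⟨ha0, -, hcc0⟩ := indep hP c (neg_mem ha) P.zero_mem Q.zero_mem hcc hsum
  have ha0' : a = 0 := by simpa using ha0
  have hEb : E = b := by rw [hEsum, ha0', hcc0]; abel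
  exact ⟨E, ⟨hEb ▸ hbP, hEb ▸ hbQ⟩, fun v hv => by rw [hEv v, hvp v hv],
    fun v h1 h2 => by rw [hEv v, hvz v h1 h2], fun v hv => by rw [hEv v, hvm v hv]⟩

end Grading

section Eigen

variable [FiniteDimensional ℝ L] [LieAlgebra.IsKilling ℝ L]
variable {P Q : LieSubalgebra ℝ L}

/-- value props bundle -/
def IsGrading (P Q : LieSubalgebra ℝ L) (F : L) : Prop :=
  (∀ v ∈ killingPolar P, ⁅F, v⁆ = v) ∧ (∀ v, v ∈ P → v ∈ Q → ⁅F, v⁆ = 0) ∧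
    (∀ v ∈ killingPolar Q, ⁅F, v⁆ = -v)

lemma grading_apply (hP : IsH1Parabolic P) (c : ComplPair P Q) {F : L} (hF : IsGrading P Q F)
    {a b cc : L} (ha : a ∈ killingPolar Q) (hbP : b ∈ P) (hbQ : b ∈ Q)
    (hcc : cc ∈ killingPolar P) : ⁅F, a + b + cc⁆ = -a + cc := by
  rw [lie_add, lie_add, hF.1 cc hcc, hF.2.1 b hbP hbQ, hF.2.2 a ha, add_zero]

lemma eigen_neg (hP : IsH1Parabolic P) (hQ : IsH1Parabolic Q) (c : ComplPair P Q) {F : L}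
    (hF : IsGrading P Q F) {v : L} (hv : ⁅F, v⁆ = -v) : v ∈ killingPolar Q := by
  obtain ⟨a, b, cc, ha, hbP, hbQ, hcc, rfl⟩ := decomp hP c v
  have hcomp : ⁅F, a + b + cc⁆ = -a + cc := grading_apply hP c hF ha hbP hbQ hcc
  have e : b + (2 : ℝ) • cc = 0 := by
    rw [show b + (2 : ℝ) • cc = (-a + cc) - -(a + b + cc) by module, ← hcomp, hv, sub_self]
  have hb0 : b = 0 := by
    have hbp : b ∈ killingPolar P := by
      have : b = -((2 : ℝ) • cc) := by rw [eq_neg_iff_add_eq_zero]; exact e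
      rw [this]; exact neg_mem (Submodule.smul_mem _ _ hcc)
    exact (Submodule.disjoint_def.mp c.2.disjoint) b hbQ hbp
  have hcc0 : cc = 0 := by
    have : (2 : ℝ) • cc = 0 := by rw [hb0, zero_add] at e; exact e
    simpa using (smul_eq_zero.mp this).resolve_left (by norm_num)
  rw [hb0, hcc0, add_zero, add_zero]
  exact ha

lemma eigen_zero (hP : IsH1Parabolic P) (hQ : IsH1Parabolic Q) (c : ComplPair P Q) {F : L}
    (hF : IsGrading P Q F) {v : L} (hv : ⁅F, v⁆ = 0) : v ∈ P ∧ v ∈ Q := by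
  obtain ⟨a, b, cc, ha, hbP, hbQ, hcc, rfl⟩ := decomp hP c v
  have hcomp : ⁅F, a + b + cc⁆ = -a + cc := grading_apply hP c hF ha hbP hbQ hcc
  have e : -a + cc = 0 := by rw [← hcomp, hv]
  have ha0 : a = 0 := by
    have haP : a ∈ P.toSubmodule := by
      have : a = cc := by rw [← sub_eq_zero]; rw [show a - cc = -(-a + cc) by module, e, neg_zero]
      rw [this]; exact polar_le hP hcc
    exact (Submodule.disjoint_def.mp c.1.disjoint) a haP ha
  have hcc0 : cc = 0 := by rw [ha0, neg_zero, zero_add] at e; exact e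
  rw [ha0, hcc0, zero_add, add_zero]
  exact ⟨hbP, hbQ⟩

lemma eigen_pos (hP : IsH1Parabolic P) (hQ : IsH1Parabolic Q) (c : ComplPair P Q) {F : L}
    (hF : IsGrading P Q F) {v : L} (hv : ⁅F, v⁆ = v) : v ∈ killingPolar P := by
  obtain ⟨a, b, cc, ha, hbP, hbQ, hcc, rfl⟩ := decomp hP c v
  have hcomp : ⁅F, a + b + cc⁆ = -a + cc := grading_apply hP c hF ha hbP hbQ hcc
  have e : (2 : ℝ) • a + b = 0 := by
    rw [show (2 : ℝ) • a + b = (a + b + cc) - (-a + cc) by module, ← hcomp, hv]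
    abel
  have ha0 : a = 0 := by
    have h2a : (2 : ℝ) • a ∈ killingPolar Q := Submodule.smul_mem _ _ ha
    have h2aP : (2 : ℝ) • a ∈ P.toSubmodule := by
      have : (2 : ℝ) • a = -b := by rw [eq_neg_iff_add_eq_zero]; exact e
      rw [this]; exact neg_mem hbP
    have := (Submodule.disjoint_def.mp c.1.disjoint) _ h2aP h2a
    simpa using (smul_eq_zero.mp this).resolve_left (by norm_num)
  have hb0 : b = 0 := by rw [ha0, smul_zero, zero_add] at e; exact e
  rw [ha0, hb0, zero_add, zero_add]
  exact hcc

/-- Main conjugation step: both complements of `P` are related by `exp (ad z)`, `z ∈ P^⊥`. -/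
lemma conj_pairs {P Q₀ Q₁ : LieSubalgebra ℝ L}
    (hP : IsH1Parabolic P) (hQ₀ : IsH1Parabolic Q₀) (hQ₁ : IsH1Parabolic Q₁)
    (c₀ : ComplPair P Q₀) (c₁ : ComplPair P Q₁) :
    ∃ z ∈ killingPolar P,
      (∀ v ∈ Q₀, expAd z v ∈ Q₁) ∧ (∀ v ∈ Q₁, expAd (-z) v ∈ Q₀) ∧
      (∀ v ∈ P, expAd z v ∈ P) ∧ (∀ v ∈ P, expAd (-z) v ∈ P) := by
  obtain ⟨E, ⟨hEP, hEQ⟩, hEp, hEz, hEm⟩ := exists_gradingElt hP hQ₁ c₁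
  obtain ⟨E', ⟨hE'P, hE'Q⟩, hE'p, hE'z, hE'm⟩ := exists_gradingElt hP hQ₀ c₀
  have hgrE : IsGrading P Q₁ E := ⟨hEp, hEz, hEm⟩
  have hgrE' : IsGrading P Q₀ E' := ⟨hE'p, hE'z, hE'm⟩
  -- members of P have no `killingPolar Q` component
  have hPdec : ∀ {QQ : LieSubalgebra ℝ L}, IsH1Parabolic QQ → ∀ (cQ : ComplPair P QQ),
      ∀ v ∈ P, ∃ b cc : L, b ∈ P ∧ b ∈ QQ ∧ cc ∈ killingPolar P ∧ v = b + cc := by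
    intro QQ hQQ cQ v hvP
    obtain ⟨a, b, cc, ha, hbP, hbQ, hcc, hsum⟩ := decomp hP cQ v
    have haP : a ∈ P.toSubmodule := by
      have : a = v - b - cc := by rw [hsum]; abel
      rw [this]
      exact sub_mem (sub_mem hvP hbP) (polar_le hP hcc)
    have ha0 : a = 0 := (Submodule.disjoint_def.mp cQ.1.disjoint) a haP ha
    exact ⟨b, cc, hbP, hbQ, hcc, by rw [hsum, ha0, zero_add]⟩
  -- decompose E' in the (P, Q₁)-grading: E' = b + z with b ∈ P ⊓ Q₁, z ∈ P^⊥
  obtain ⟨b, z, hbP, hbQ₁, hz, hE'sum⟩ := hPdec hQ₁ c₁ E' hE'P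
  -- claim : b = E
  have hbE : b = E := by
    have had : ∀ v : L, ⁅b - E, v⁆ = 0 := by
      intro v
      obtain ⟨a', b', cc', ha', hb'P, hb'Q, hcc', rfl⟩ := decomp hP c₁ v
      have hva : ⁅b - E, a'⁆ = 0 := by
        have h1 : ⁅b, a'⁆ ∈ killingPolar Q₁ := by
          rw [← lie_skew]; exact neg_mem (lie_polar_self ha' hbQ₁)
        have h2 : ⁅b, a'⁆ + a' ∈ killingPolar Q₁ := add_mem h1 ha'
        have h3 : ⁅b, a'⁆ + a' ∈ P.toSubmodule := by
          obtain ⟨α, β, γ, hα, hβP, hβQ, hγ, hdec⟩ := decomp hP c₀ a'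
          have hE'a' : ⁅E', a'⁆ + a' = β + (2 : ℝ) • γ := by
            rw [hdec, grading_apply hP c₀ hgrE' hα hβP hβQ hγ]
            module
          have hza' : ⁅z, a'⁆ ∈ P := lie_polar_mem hP hz a'
          have hba' : ⁅b, a'⁆ + a' = (β + (2 : ℝ) • γ) - ⁅z, a'⁆ := by
            rw [← hE'a', hE'sum, add_lie]
            abel
          rw [hba']
          exact sub_mem (add_mem hβP (Submodule.smul_mem _ _ (polar_le hP hγ))) hza'
        have h4 : ⁅b, a'⁆ + a' = 0 := (Submodule.disjoint_def.mp c₁.1.disjoint) _ h3 h2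
        have h5 : ⁅b, a'⁆ = -a' := by rw [eq_neg_iff_add_eq_zero]; exact h4
        rw [sub_lie, h5, hEm a' ha']
        abel
      have hvb : ⁅b - E, b'⁆ = 0 := by
        have h1 : ⁅b, b'⁆ ∈ P := P.lie_mem hbP hb'P
        have h1' : ⁅b, b'⁆ ∈ Q₁ := Q₁.lie_mem hbQ₁ hb'Q
        have h2 : ⁅b, b'⁆ ∈ killingPolar P := by
          obtain ⟨β, γ, hβP, hβQ, hγ, hdec⟩ := hPdec hQ₀ c₀ b' hb'P
          have hE'b' : ⁅E', b'⁆ = γ := by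
            rw [hdec, lie_add, hE'z β hβP hβQ, hE'p γ hγ, zero_add]
          have hzb' : ⁅z, b'⁆ ∈ killingPolar P := lie_polar_self hz hb'P
          have : ⁅b, b'⁆ = γ - ⁅z, b'⁆ := by
            rw [← hE'b', hE'sum, add_lie]; abel
          rw [this]
          exact sub_mem hγ hzb'
        have h3 : ⁅b, b'⁆ = 0 :=
          (Submodule.disjoint_def.mp c₁.2.disjoint) _ h1' h2
        rw [sub_lie, h3, hEz b' hb'P hb'Q]
        abel
      have hvc : ⁅b - E, cc'⁆ = 0 := by
        have h1 : ⁅b, cc'⁆ = ⁅E', cc'⁆ - ⁅z, cc'⁆ := by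
          rw [hE'sum, add_lie]; abel
        rw [sub_lie, h1, hE'p cc' hcc', hP z hz cc' hcc', hEp cc' hcc']
        abel
      rw [lie_add, lie_add, hva, hvb, hvc]
      abel
    have hker : b - E ∈ LinearMap.ker (killingForm ℝ L) := by
      rw [LinearMap.mem_ker]
      ext y
      rw [killingForm_apply_apply]
      have : ad ℝ L (b - E) = 0 := by
        ext v
        rw [LinearMap.zero_apply, ad_apply, had v]
      rw [this]
      simp
    rw [LieAlgebra.IsKilling.ker_killingForm_eq_bot] at hker
    rw [← sub_eq_zero]
    exact hker
  have hE'E : E' = E + z := by rw [hE'sum, hbE]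
  have hz3 : (ad ℝ L z) ^ 3 = 0 := ad_cube hP hz
  have hz3' : (ad ℝ L (-z)) ^ 3 = 0 := expAd_neg_cube hz3
  -- expAd z sends E' to E, expAd (-z) sends E to E'
  have hzE' : ⁅z, E'⁆ = -z := by
    rw [← lie_skew, hE'p z hz]
  have hfE' : expAd z E' = E := by
    rw [expAd_apply hz3, hzE', lie_neg, lie_self, neg_zero, smul_zero, add_zero, hE'E]
    abel
  have hzE : ⁅-z, E⁆ = z := by
    rw [neg_lie, ← lie_skew, hEp z hz, neg_neg]
  have hfE : expAd (-z) E = E' := by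
    rw [expAd_apply hz3', hzE]
    have hzz : ⁅(-z : L), z⁆ = 0 := by rw [neg_lie, lie_self, neg_zero]
    rw [hzz, smul_zero, add_zero, hE'E]
  have hconj : ∀ v, ⁅E, expAd z v⁆ = expAd z ⁅E', v⁆ := fun v => by
    conv_lhs => rw [← hfE']
    exact (expAd_lie hz3 E' v).symm
  have hconj' : ∀ v, ⁅E', expAd (-z) v⁆ = expAd (-z) ⁅E, v⁆ := fun v => by
    conv_lhs => rw [← hfE]
    exact (expAd_lie hz3' E v).symm
  have hQdec : ∀ {QQ : LieSubalgebra ℝ L}, IsH1Parabolic QQ → ∀ (cQ : ComplPair P QQ),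
      ∀ v ∈ QQ, ∃ a b : L, a ∈ killingPolar QQ ∧ b ∈ P ∧ b ∈ QQ ∧ v = a + b := by
    intro QQ hQQ cQ v hvQ
    obtain ⟨a, b, cc, ha, hbP, hbQ, hcc, hsum⟩ := decomp hP cQ v
    have hccQ : cc ∈ QQ.toSubmodule := by
      have : cc = v - a - b := by rw [hsum]; abel
      rw [this]
      exact sub_mem (sub_mem hvQ (polar_le hQQ ha)) hbQ
    have hcc0 : cc = 0 := (Submodule.disjoint_def.mp cQ.2.disjoint) cc hccQ hcc
    exact ⟨a, b, ha, hbP, hbQ, by rw [hsum, hcc0, add_zero]⟩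
  refine ⟨z, hz, ?_, ?_, ?_, ?_⟩
  · intro v hv
    obtain ⟨a, b, ha, hbP, hbQ, rfl⟩ := hQdec hQ₀ c₀ v hv
    rw [map_add]
    refine Q₁.add_mem ?_ ?_
    · have h1 : ⁅E, expAd z a⁆ = -(expAd z a) := by
        rw [hconj a, hE'm a ha, map_neg]
      exact (polar_le hQ₁ (eigen_neg hP hQ₁ c₁ hgrE h1) : _)
    · have h1 : ⁅E, expAd z b⁆ = 0 := by
        rw [hconj b, hE'z b hbP hbQ, map_zero]
      exact (eigen_zero hP hQ₁ c₁ hgrE h1).2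
  · intro v hv
    obtain ⟨a, b, ha, hbP, hbQ, rfl⟩ := hQdec hQ₁ c₁ v hv
    rw [map_add]
    refine Q₀.add_mem ?_ ?_
    · have h1 : ⁅E', expAd (-z) a⁆ = -(expAd (-z) a) := by
        rw [hconj' a, hEm a ha, map_neg]
      exact (polar_le hQ₀ (eigen_neg hP hQ₀ c₀ hgrE' h1) : _)
    · have h1 : ⁅E', expAd (-z) b⁆ = 0 := by
        rw [hconj' b, hEz b hbP hbQ, map_zero]
      exact (eigen_zero hP hQ₀ c₀ hgrE' h1).2
  · intro v hv
    obtain ⟨b, cc, hbP, hbQ, hcc, rfl⟩ := hPdec hQ₀ c₀ v hv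
    rw [map_add]
    refine P.add_mem ?_ ?_
    · have h1 : ⁅E, expAd z b⁆ = 0 := by
        rw [hconj b, hE'z b hbP hbQ, map_zero]
      exact (eigen_zero hP hQ₁ c₁ hgrE h1).1
    · have h1 : ⁅E, expAd z cc⁆ = expAd z cc := by
        rw [hconj cc, hE'p cc hcc]
      exact (polar_le hP (eigen_pos hP hQ₁ c₁ hgrE h1) : _)
  · intro v hv
    obtain ⟨b, cc, hbP, hbQ, hcc, rfl⟩ := hPdec hQ₁ c₁ v hv
    rw [map_add]
    refine P.add_mem ?_ ?_
    · have h1 : ⁅E', expAd (-z) b⁆ = 0 := by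
        rw [hconj' b, hEz b hbP hbQ, map_zero]
      exact (eigen_zero hP hQ₀ c₀ hgrE' h1).1
    · have h1 : ⁅E', expAd (-z) cc⁆ = expAd (-z) cc := by
        rw [hconj' cc, hEp cc hcc]
      exact (polar_le hP (eigen_pos hP hQ₀ c₀ hgrE' h1) : _)

end Eigen
section Transport

variable [Module.Finite ℝ L]

lemma killingForm_lieEquiv (e : L ≃ₗ⁅ℝ⁆ L) (a b : L) :
    killingForm ℝ L (e a) (e b) = killingForm ℝ L a b := by
  have had : ∀ a : L, ad ℝ L (e a) = e.toLinearEquiv.conj (ad ℝ L a) := by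
    intro a
    ext v
    rw [ad_apply, LinearEquiv.conj_apply_apply, ad_apply]
    show ⁅e a, v⁆ = e ⁅a, e.symm v⁆
    rw [LieEquiv.map_lie]
    congr 1
    exact (e.apply_symm_apply v).symm
  rw [killingForm_apply_apply, killingForm_apply_apply, had, had,
    ← LinearEquiv.conj_comp, LinearMap.trace_conj']

end Transport
end PCaux

/-- **Transitivity on the space of complementary pairs.** Given complementary pairs
`(𝔭, 𝔮)`, `(𝔭′, 𝔮′)` of height-one parabolic subalgebras and an automorphism `h` of
`𝔤` with `h(𝔭) = 𝔭′`, there is `x ∈ 𝔭^⊥` such that `g := h ∘ exp(ad x)` is an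
automorphism of `𝔤` carrying `𝔭` to `𝔭′` and `𝔮` to `𝔮′`. -/
theorem transitive_on_complementary_pairs
    [FiniteDimensional ℝ L] [LieAlgebra.IsSemisimple ℝ L]
    (p q p' q' : LieSubalgebra ℝ L)
    (hp : IsH1Parabolic p) (hq : IsH1Parabolic q)
    (hp' : IsH1Parabolic p') (hq' : IsH1Parabolic q')
    (hpq : ComplPair p q) (hpq' : ComplPair p' q')
    (h : L →ₗ⁅ℝ⁆ L) (hbij : Function.Bijective h) (hmap : p.map h = p') :
    ∃ x ∈ killingPolar p,
      Function.Bijective (⇑h ∘ ⇑(expAd x)) ∧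
      (∀ a b : L, h (expAd x ⁅a, b⁆) = ⁅h (expAd x a), h (expAd x b)⁆) ∧
      (⇑h ∘ ⇑(expAd x)) '' (p : Set L) = (p' : Set L) ∧
      (⇑h ∘ ⇑(expAd x)) '' (q : Set L) = (q' : Set L) := by
  letI : LieAlgebra.IsKilling ℝ L := PCaux.isKilling p hp
  set e : L ≃ₗ⁅ℝ⁆ L := LieEquiv.ofBijective h hbij with he
  have hecoe : ∀ v : L, e v = h v := fun v => rfl
  have hesymm : ∀ v : L, h (e.symm v) = v := fun v => by
    rw [← hecoe]; exact e.apply_symm_apply v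
  have hsymme : ∀ v : L, e.symm (h v) = v := fun v => by
    rw [← hecoe]; exact e.symm_apply_apply v
  have kinv : ∀ a b : L, killingForm ℝ L (h a) (h b) = killingForm ℝ L a b := fun a b => by
    rw [← hecoe, ← hecoe]; exact PCaux.killingForm_lieEquiv e a b
  have hmem_map : ∀ (S : LieSubalgebra ℝ L) (x : L), x ∈ S.map h ↔ ∃ y ∈ S, h y = x := by
    intro S x
    exact LieSubalgebra.mem_map (f := h) (K := S) x
  -- transported polar membership
  have hpolar_iff : ∀ (S : LieSubalgebra ℝ L) (x : L),
      x ∈ killingPolar (S.map h) ↔ e.symm x ∈ killingPolar S := by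
    intro S x
    constructor
    · intro hx y hy
      have := hx (h y) ((hmem_map S (h y)).mpr ⟨y, hy, rfl⟩)
      rw [← hesymm x, kinv] at this
      exact this
    · intro hx y hy
      obtain ⟨w, hw, rfl⟩ := (hmem_map S y).mp hy
      rw [← hesymm x, kinv]
      exact hx w hw
  have hpolar_map : ∀ (S : LieSubalgebra ℝ L),
      killingPolar (S.map h) = Submodule.map (e.toLinearEquiv : L →ₗ[ℝ] L) (killingPolar S) := by
    intro S
    ext x
    rw [Submodule.mem_map, hpolar_iff S x]
    constructor
    · intro hx
      exact ⟨e.symm x, hx, e.apply_symm_apply x⟩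
    · rintro ⟨y, hy, rfl⟩
      show e.symm (e y) ∈ _
      rw [e.symm_apply_apply]
      exact hy
  have hsub_map : ∀ (S : LieSubalgebra ℝ L),
      (S.map h).toSubmodule = Submodule.map (e.toLinearEquiv : L →ₗ[ℝ] L) S.toSubmodule := by
    intro S
    ext x
    rw [Submodule.mem_map]
    show x ∈ S.map h ↔ _
    rw [hmem_map S]
    constructor
    · rintro ⟨y, hy, rfl⟩; exact ⟨y, hy, rfl⟩
    · rintro ⟨y, hy, rfl⟩; exact ⟨y, hy, rfl⟩
  -- the transported subalgebra Q₀ = h(q)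
  have hQ₀parab : IsH1Parabolic (q.map h) := by
    intro x hx y hy
    have hx' := (hpolar_iff q x).mp hx
    have hy' := (hpolar_iff q y).mp hy
    have : ⁅e.symm x, e.symm y⁆ = 0 := hq _ hx' _ hy'
    have h2 := congrArg h this
    rw [LieHom.map_lie, hesymm, hesymm, map_zero] at h2
    exact h2
  have hcompl : ComplPair p' (q.map h) := by
    constructor
    · have hc := (Submodule.orderIsoMapComap e.toLinearEquiv).isCompl hpq.1
      rw [Submodule.orderIsoMapComap_apply, Submodule.orderIsoMapComap_apply] at hc
      rw [← hsub_map p, ← hpolar_map q, hmap] at hc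
      exact hc
    · have hc := (Submodule.orderIsoMapComap e.toLinearEquiv).isCompl hpq.2
      rw [Submodule.orderIsoMapComap_apply, Submodule.orderIsoMapComap_apply] at hc
      rw [← hsub_map q, ← hpolar_map p, hmap] at hc
      exact hc
  obtain ⟨z, hz, m1, m2, m3, m4⟩ := PCaux.conj_pairs hp' hQ₀parab hq' hcompl hpq'
  have hzp : e.symm z ∈ killingPolar p := by
    rw [← hpolar_iff p]
    rw [hmap]
    exact hz
  refine ⟨e.symm z, hzp, ?_, ?_, ?_, ?_⟩
  all_goals {
    have hx3 : (ad ℝ L (e.symm z)) ^ 3 = 0 := PCaux.ad_cube hp hzp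
    have hz3 : (ad ℝ L z) ^ 3 = 0 := PCaux.ad_cube hp' hz
    have hpoint : ∀ v : L, h (expAd (e.symm z) v) = expAd z (h v) := fun v => by
      rw [PCaux.lieHom_expAd h (e.symm z) v, hesymm]
    first
    | exact Function.Bijective.comp hbij (PCaux.expAd_bijective hx3)
    | (intro a b; rw [PCaux.expAd_lie hx3 a b, LieHom.map_lie])
    | · -- image of p
        ext u
        simp only [Set.mem_image, Function.comp_apply, SetLike.mem_coe]
        constructor
        · rintro ⟨v, hvp, rfl⟩
          rw [hpoint v]
          have : h v ∈ p' := by rw [← hmap]; exact (hmem_map p (h v)).mpr ⟨v, hvp, rfl⟩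
          exact m3 _ this
        · intro hu
          have hw : expAd (-z) u ∈ p' := m4 u hu
          rw [← hmap] at hw
          obtain ⟨v, hv, hveq⟩ := (hmem_map p _).mp hw
          refine ⟨v, hv, ?_⟩
          rw [hpoint v, hveq, PCaux.expAd_cancel hz3]
    | · -- image of q
        ext u
        simp only [Set.mem_image, Function.comp_apply, SetLike.mem_coe]
        constructor
        · rintro ⟨v, hvq, rfl⟩
          rw [hpoint v]
          have : h v ∈ q.map h := (hmem_map q (h v)).mpr ⟨v, hvq, rfl⟩
          exact m1 _ this
        · intro hu
          have hw : expAd (-z) u ∈ q.map h := m2 u hu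
          obtain ⟨v, hv, hveq⟩ := (hmem_map q _).mp hw
          refine ⟨v, hv, ?_⟩
          rw [hpoint v, hveq, PCaux.expAd_cancel hz3]
  }
end

section
/- Let 𝔤 be a finite-dimensional real semisimple Lie algebra, U an open subset of a finite-dimensional real normed space E, f a map assigning to each x ∈ U a height-one parabolic subalgebra f(x) ≤ 𝔤, and η a 𝔤-valued 1-form on U with η_x(u) ∈ f(x)^⊥ for all x ∈ U and u ∈ E. Then η is closed if and only if for every t ∈ ℝ the connection ∇^t = d + tη is flat, i.e. t·(dη)_x(u, v) + t²·⁅η_x(u), η_x(v)⁆ = 0 for all x ∈ U and u, v ∈ E. -/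
open Module

/-- A Lie algebra structure on a real normed space, recorded as a bilinear bracket.
(Using a bracket carried as data avoids typeclass diamonds between the normed and
the Lie-algebraic structure.) -/
structure LieStructure (L : Type*) [NormedAddCommGroup L] [NormedSpace ℝ L] where
  bracket : L →ₗ[ℝ] L →ₗ[ℝ] L
  alternating : ∀ x : L, bracket x x = 0
  jacobi : ∀ x y z : L, bracket x (bracket y z) =
    bracket (bracket x y) z + bracket y (bracket x z)

namespace LieStructure

variable {L : Type*} [NormedAddCommGroup L] [NormedSpace ℝ L] (B : LieStructure L)

/-- The adjoint action `ad x = ⁅x, ·⁆`. -/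
def ad (x : L) : Module.End ℝ L := B.bracket x

/-- The Killing form `κ(x, y) = tr (ad x ∘ ad y)`. -/
noncomputable def killing (x y : L) : ℝ := LinearMap.trace ℝ L (B.ad x * B.ad y)

/-- Semisimplicity, via Cartan's criterion: the Killing form is nondegenerate. -/
def IsSemisimple : Prop := ∀ x : L, (∀ y : L, B.killing x y = 0) → x = 0

/-- A Lie subalgebra: a submodule closed under the bracket. -/
def IsSubalgebra (p : Submodule ℝ L) : Prop :=
  ∀ x ∈ p, ∀ y ∈ p, B.bracket x y ∈ p

/-- The Killing polar `𝔭^⊥`. -/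
noncomputable def polar (p : Submodule ℝ L) : Submodule ℝ L where
  carrier := {x | ∀ y ∈ p, B.killing x y = 0}
  add_mem' := fun {a b} ha hb y hy => by
    have : B.killing (a + b) y = B.killing a y + B.killing b y := by
      simp [killing, ad, map_add, add_mul]
    rw [this, ha y hy, hb y hy, add_zero]
  zero_mem' := fun y hy => by simp [killing, ad, map_zero, zero_mul]
  smul_mem' := fun c a ha y hy => by
    have : B.killing (c • a) y = c * B.killing a y := by
      simp [killing, ad, map_smul, smul_mul_assoc]
    rw [this, ha y hy, mul_zero]

/-- A height-one parabolic subalgebra: a subalgebra whose Killing polar is an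
abelian (hence nilpotent) subalgebra. -/
def IsH1Parabolic (p : Submodule ℝ L) : Prop :=
  B.IsSubalgebra p ∧ ∀ x ∈ B.polar p, ∀ y ∈ B.polar p, B.bracket x y = 0

end LieStructure

open LieStructure

/-- **Zero-curvature representation of the isothermic condition.**  For a map `f`
into a symmetric `R`-space (a family of height-one parabolic subalgebras) and a
`𝔤`-valued 1-form `η` with `η_x(u) ∈ f(x)^⊥`, `η` is closed if and only if every
connection `∇ᵗ = d + tη` is flat. -/
theorem closed_iff_flat_pencil
    {L : Type*} [NormedAddCommGroup L] [NormedSpace ℝ L] [FiniteDimensional ℝ L]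
    (B : LieStructure L) (hss : B.IsSemisimple)
    {E : Type*} [NormedAddCommGroup E] [NormedSpace ℝ E] [FiniteDimensional ℝ E]
    (U : Set E) (hU : IsOpen U)
    (f : E → Submodule ℝ L) (hf : ∀ x ∈ U, B.IsH1Parabolic (f x))
    (η : E → E →L[ℝ] L) (hη : ContDiffOn ℝ (⊤ : ℕ∞) η U)
    (hval : ∀ x ∈ U, ∀ u : E, η x u ∈ B.polar (f x)) :
    (∀ x ∈ U, ∀ u v : E, fderiv ℝ η x u v - fderiv ℝ η x v u = 0) ↔
    (∀ t : ℝ, ∀ x ∈ U, ∀ u v : E,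
      t • (fderiv ℝ η x u v - fderiv ℝ η x v u)
        + (t ^ 2) • B.bracket (η x u) (η x v) = 0) := by
  have hbr : ∀ x ∈ U, ∀ u v : E, B.bracket (η x u) (η x v) = 0 := fun x hx u v =>
    (hf x hx).2 _ (hval x hx u) _ (hval x hx v)
  constructor
  · intro h t x hx u v
    rw [h x hx u v, hbr x hx u v, smul_zero, smul_zero, add_zero]
  · intro h x hx u v
    have := h 1 x hx u v
    rw [hbr x hx u v, smul_zero, add_zero, one_smul] at this
    exact this
end

section
/- Let (𝔭₀, 𝔭∞) be a complementary pair of height-one parabolic subalgebras of a finite-dimensional real semisimple Lie algebra 𝔤, U an open subset of a finite-dimensional real normed space E, F : U → 𝔤 a smooth map with F(x) ∈ 𝔭∞^⊥ for all x, and ω a 𝔤-valued 1-form on U with ω_x(u) ∈ 𝔭₀^⊥ for all x, u. Define the 𝔤-valued 1-form η by η_x(u) := exp(ad F(x))(ω_x(u)). Then η is closed if and only if ω is closed and ⁅(DF)_x(u), ω_x(v)⁆ = ⁅(DF)_x(v), ω_x(u)⁆ for all x, u, v (i.e. ⁅dF ∧ ω⁆ = 0). -/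
open Module

namespace LieStructure

variable {L : Type*} [NormedAddCommGroup L] [NormedSpace ℝ L] (B : LieStructure L)

/-- Complementary pair of height-one parabolic subalgebras:
`𝔤 = 𝔭 ⊕ 𝔮^⊥` and `𝔤 = 𝔮 ⊕ 𝔭^⊥`. -/
noncomputable def ComplPair (p q : Submodule ℝ L) : Prop :=
  IsCompl p (B.polar q) ∧ IsCompl q (B.polar p)

/-- `exp (ad z)`, the finite exponential series of the adjoint action (exhaustive
whenever `ad z` is nilpotent, since then `(ad z)^(dim 𝔤 + 1) = 0`). -/
noncomputable def expAd [FiniteDimensional ℝ L] (z : L) : Module.End ℝ L :=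
  ∑ k ∈ Finset.range (Module.finrank ℝ L + 1), (k.factorial : ℝ)⁻¹ • (B.ad z) ^ k

end LieStructure

open LieStructure


namespace LieStructure

variable {L : Type*} [NormedAddCommGroup L] [NormedSpace ℝ L] (B : LieStructure L)

theorem killing_symm (x y : L) : B.killing x y = B.killing y x :=
  LinearMap.trace_mul_comm ℝ (B.ad x) (B.ad y)

theorem bracket_antisymm (x y : L) : B.bracket x y = - B.bracket y x := by
  have h := B.alternating (x + y)
  simp only [map_add, LinearMap.add_apply, B.alternating x, B.alternating y,
    zero_add, add_zero] at h
  exact eq_neg_of_add_eq_zero_right h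

theorem ad_bracket (x y : L) :
    B.ad (B.bracket x y) = B.ad x * B.ad y - B.ad y * B.ad x := by
  ext z
  have := B.jacobi x y z
  simp only [ad, LinearMap.sub_apply, Module.End.mul_apply] at *
  rw [eq_sub_iff_add_eq]
  exact this.symm

theorem killing_invariant (x y z : L) :
    B.killing (B.bracket x y) z = B.killing x (B.bracket y z) := by
  have h2 : LinearMap.trace ℝ L (B.ad y * (B.ad x * B.ad z))
      = LinearMap.trace ℝ L (B.ad x * (B.ad z * B.ad y)) := by
    rw [LinearMap.trace_mul_comm, mul_assoc]
  simp only [killing, ad_bracket, sub_mul, mul_sub, map_sub, mul_assoc, h2]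

theorem killing_neg_left (x y : L) : B.killing (-x) y = - B.killing x y := by
  simp [killing, ad, map_neg, neg_mul]

theorem killing_add_right (x y z : L) :
    B.killing x (y + z) = B.killing x y + B.killing x z := by
  simp [killing, ad, map_add, mul_add]

theorem killing_zero_right (x : L) : B.killing x 0 = 0 := by
  simp [killing, ad, map_zero, mul_zero]

theorem mem_polar {p : Submodule ℝ L} {x : L} :
    x ∈ B.polar p ↔ ∀ y ∈ p, B.killing x y = 0 := Iff.rfl

/-- The Killing form as a bilinear form. -/
noncomputable def killingForm : LinearMap.BilinForm ℝ L :=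
  LinearMap.mk₂ ℝ B.killing
    (fun x x' y => by simp [killing, ad, map_add, add_mul])
    (fun c x y => by simp [killing, ad, map_smul, smul_mul_assoc])
    (fun x y y' => by simp [killing, ad, map_add, mul_add])
    (fun c x y => by simp [killing, ad, map_smul, mul_smul_comm])

@[simp] theorem killingForm_apply (x y : L) : B.killingForm x y = B.killing x y := rfl

theorem killingForm_isRefl : B.killingForm.IsRefl := fun x y h => by
  simpa [killing_symm] using h

theorem killingForm_nondegenerate (hss : B.IsSemisimple) : B.killingForm.Nondegenerate :=
  B.killingForm_isRefl.nondegenerate_iff_separatingLeft.mpr fun m h => hss m h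

theorem polar_eq_orthogonal (p : Submodule ℝ L) :
    B.polar p = B.killingForm.orthogonal p := by
  ext x
  rw [mem_polar, LinearMap.BilinForm.mem_orthogonal_iff]
  constructor
  · intro h n hn
    have := h n hn
    simpa [LinearMap.BilinForm.IsOrtho, killing_symm] using this
  · intro h y hy
    have := h y hy
    simpa [LinearMap.BilinForm.IsOrtho, killing_symm] using this

theorem polar_polar [FiniteDimensional ℝ L] (hss : B.IsSemisimple) (p : Submodule ℝ L) :
    B.polar (B.polar p) = p := by
  rw [polar_eq_orthogonal, polar_eq_orthogonal,
    LinearMap.BilinForm.orthogonal_orthogonal (B.killingForm_nondegenerate hss)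
      B.killingForm_isRefl]

end LieStructure

namespace LieStructure

variable {L : Type*} [NormedAddCommGroup L] [NormedSpace ℝ L] (B : LieStructure L)

/-- `[p, p^⊥] ⊆ p^⊥` for a subalgebra `p`. -/
theorem bracket_mem_polar {p : Submodule ℝ L} (hp : B.IsSubalgebra p) {x w : L}
    (hx : x ∈ p) (hw : w ∈ B.polar p) : B.bracket x w ∈ B.polar p := by
  intro y hy
  have h1 : B.bracket x w = - B.bracket w x := B.bracket_antisymm x w
  rw [h1, killing_neg_left, killing_invariant, hw _ (hp x hx y hy), neg_zero]

/-- If `p^⊥` is abelian, then `[p^⊥, L] ⊆ p^⊥^⊥`. -/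
theorem bracket_mem_polar_polar {p : Submodule ℝ L}
    (hab : ∀ x ∈ B.polar p, ∀ y ∈ B.polar p, B.bracket x y = 0)
    {z : L} (hz : z ∈ B.polar p) (w : L) :
    B.bracket z w ∈ B.polar (B.polar p) := by
  intro y hy
  have h1 : B.bracket z w = - B.bracket w z := B.bracket_antisymm z w
  rw [h1, killing_neg_left, killing_invariant, hab z hz y hy, killing_zero_right, neg_zero]

section Structure

variable [FiniteDimensional ℝ L] {p0 pinf : Submodule ℝ L}
  (hss : B.IsSemisimple)
  (h0 : B.IsH1Parabolic p0) (hinf : B.IsH1Parabolic pinf)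
  (hc : B.ComplPair p0 pinf)

include hss h0 hinf hc

/-- `𝔭∞^⊥` is Killing-isotropic, hence contained in `𝔭∞`. -/
theorem polar_le_self : B.polar pinf ≤ pinf := by
  have hpp0 : B.polar (B.polar p0) = p0 := B.polar_polar hss p0
  have hppinf : B.polar (B.polar pinf) = pinf := B.polar_polar hss pinf
  have key : ∀ z ∈ B.polar pinf, ∀ z' ∈ B.polar pinf, B.killing z z' = 0 := by
    intro z hz z' hz'
    -- `M = ad z * ad z'` squares to zero
    have hM : (B.ad z * B.ad z') * (B.ad z * B.ad z') = 0 := by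
      ext y
      -- decompose y = y_p + y_b with y_p ∈ pinf, y_b ∈ polar p0
      have hy : y ∈ pinf ⊔ B.polar p0 := by
        rw [hc.2.codisjoint.eq_top]; trivial
      obtain ⟨yp, hyp, yb, hyb, rfl⟩ := Submodule.mem_sup.mp hy
      have hX : B.bracket z (B.bracket z' (yp + yb)) ∈ B.polar pinf := by
        rw [map_add]
        have h1 : B.bracket z' yp ∈ B.polar pinf := by
          rw [B.bracket_antisymm z' yp]
          exact (B.polar pinf).neg_mem (B.bracket_mem_polar hinf.1 hyp hz')
        have h2 : B.bracket z (B.bracket z' yp) = 0 := hinf.2 z hz _ h1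
        rw [map_add, h2, zero_add]
        have h3 : B.bracket z' yb ∈ pinf := by
          rw [← hppinf]; exact B.bracket_mem_polar_polar hinf.2 hz' yb
        rw [B.bracket_antisymm z (B.bracket z' yb)]
        exact (B.polar pinf).neg_mem (B.bracket_mem_polar hinf.1 h3 hz)
      simp only [Module.End.mul_apply, LinearMap.zero_apply, ad]
      rw [hinf.2 z' hz' _ hX, map_zero]
    have hnil : IsNilpotent (B.ad z * B.ad z') := ⟨2, by rw [pow_two]; exact hM⟩
    have := LinearMap.isNilpotent_trace_of_isNilpotent hnil
    exact this.eq_zero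
  intro z hz
  rw [← hppinf]
  exact fun y hy => key z hz y hy

/-- `(ad z)^3 = 0` for `z ∈ 𝔭∞^⊥`. -/
theorem ad_cube_eq_zero {z : L} (hz : z ∈ B.polar pinf) : (B.ad z) ^ 3 = 0 := by
  have hppinf : B.polar (B.polar pinf) = pinf := B.polar_polar hss pinf
  have ha_le : B.polar pinf ≤ pinf := B.polar_le_self hss h0 hinf hc
  ext y
  have h1 : B.bracket z y ∈ pinf := by
    have hy : y ∈ pinf ⊔ B.polar p0 := by
      rw [hc.2.codisjoint.eq_top]; trivial
    obtain ⟨yp, hyp, yb, hyb, rfl⟩ := Submodule.mem_sup.mp hy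
    rw [map_add]
    refine pinf.add_mem ?_ ?_
    · apply ha_le
      rw [B.bracket_antisymm z yp]
      exact (B.polar pinf).neg_mem (B.bracket_mem_polar hinf.1 hyp hz)
    · rw [← hppinf]; exact B.bracket_mem_polar_polar hinf.2 hz yb
  have h2 : B.bracket z (B.bracket z y) ∈ B.polar pinf := by
    rw [B.bracket_antisymm z (B.bracket z y)]
    exact (B.polar pinf).neg_mem (B.bracket_mem_polar hinf.1 h1 hz)
  have h3 : B.bracket z (B.bracket z (B.bracket z y)) = 0 := hinf.2 z hz _ h2
  show (B.ad z) ((B.ad z) ((B.ad z) ((1 : Module.End ℝ L) y))) = 0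
  simpa [ad] using h3

end Structure

end LieStructure

set_option linter.unusedSectionVars false

namespace LieStructure

variable {L : Type*} [NormedAddCommGroup L] [NormedSpace ℝ L] (B : LieStructure L)

section CLM

variable [FiniteDimensional ℝ L]

/-- The adjoint action as a continuous linear map `L →L (L →L L)`. -/
noncomputable def adCL : L →L[ℝ] (L →L[ℝ] L) :=
  LinearMap.toContinuousLinearMap
    { toFun := fun z => LinearMap.toContinuousLinearMap (B.ad z)
      map_add' := fun x y => by
        show LinearMap.toContinuousLinearMap (B.ad (x + y)) = _
        rw [show B.ad (x + y) = B.ad x + B.ad y from B.bracket.map_add x y, map_add]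
      map_smul' := fun c x => by
        show LinearMap.toContinuousLinearMap (B.ad (c • x))
          = c • LinearMap.toContinuousLinearMap (B.ad x)
        rw [show B.ad (c • x) = c • B.ad x from B.bracket.map_smul c x, map_smul] }

@[simp] theorem adCL_apply (z v : L) : B.adCL z v = B.bracket z v := rfl

theorem adCL_comm {z w : L} (h : B.bracket z w = 0) :
    B.adCL z * B.adCL w = B.adCL w * B.adCL z := by
  ext v
  have := B.jacobi z w v
  simp only [ContinuousLinearMap.mul_apply, adCL_apply] at *
  rw [this, h]
  simp [map_zero]

/-- On elements with `(ad z)^3 = 0` (and `finrank ≥ 2`), the exponential is the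
quadratic polynomial. -/
theorem expAd_eq_quadratic {z : L} (hz : (B.ad z) ^ 3 = 0) (hrk : 2 ≤ finrank ℝ L) :
    LinearMap.toContinuousLinearMap (B.expAd z)
      = 1 + B.adCL z + (2⁻¹ : ℝ) • (B.adCL z * B.adCL z) := by
  have hEnd : B.expAd z = 1 + B.ad z + (2⁻¹ : ℝ) • (B.ad z * B.ad z) := by
    have hsub : Finset.range 3 ⊆ Finset.range (finrank ℝ L + 1) := by
      apply Finset.range_subset_range.mpr; omega
    have hvan : ∀ k ∈ Finset.range (finrank ℝ L + 1), k ∉ Finset.range 3 →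
        (k.factorial : ℝ)⁻¹ • (B.ad z) ^ k = 0 := by
      intro k _ hk3
      rw [Finset.mem_range, not_lt] at hk3
      rw [show k = 3 + (k - 3) by omega, pow_add, hz, zero_mul, smul_zero]
    rw [expAd, ← Finset.sum_subset hsub hvan]
    rw [Finset.sum_range_succ, Finset.sum_range_succ, Finset.sum_range_succ,
      Finset.sum_range_zero, zero_add]
    norm_num [Nat.factorial, pow_two]
  rw [hEnd]
  ext v
  simp [ad, ContinuousLinearMap.mul_apply]

end CLM

end LieStructure

/-- Membership of derivatives: if `f` maps an open set into a submodule, so does its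
derivative. -/
theorem fderiv_mem_of_mem {E V : Type*} [NormedAddCommGroup E] [NormedSpace ℝ E]
    [NormedAddCommGroup V] [NormedSpace ℝ V] [FiniteDimensional ℝ V]
    {U : Set E} (hU : IsOpen U) {f : E → V} {p : Submodule ℝ V}
    (hfp : ∀ y ∈ U, f y ∈ p) {x : E} (hx : x ∈ U) {f' : E →L[ℝ] V}
    (hd : HasFDerivAt f f' x) (u : E) : f' u ∈ p := by
  obtain ⟨q, hq⟩ := Submodule.exists_isCompl p
  set π : V →ₗ[ℝ] V := p.subtype.comp (p.linearProjOfIsCompl q hq) with hπ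
  set πC : V →L[ℝ] V := LinearMap.toContinuousLinearMap π with hπC
  have hππ : ∀ z ∈ p, πC z = z := by
    intro z hz
    show π z = z
    exact congrArg Subtype.val (Submodule.projectionOnto_apply_left hq ⟨z, hz⟩)
  have hmem : ∀ z, πC z ∈ p := fun z => Submodule.coe_mem _
  have h2 : HasFDerivAt (fun y => πC (f y)) (πC.comp f') x := πC.hasFDerivAt.comp x hd
  have h3 : HasFDerivAt f (πC.comp f') x := by
    refine h2.congr_of_eventuallyEq ?_
    exact Filter.eventuallyEq_of_mem (hU.mem_nhds hx) fun y hy => (hππ _ (hfp y hy)).symm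
  have h4 : f' = πC.comp f' := hd.unique h3
  rw [h4]
  exact hmem _

/-- The submodule of continuous linear maps valued in a submodule. -/
def clmSub {E V : Type*} [NormedAddCommGroup E] [NormedSpace ℝ E]
    [NormedAddCommGroup V] [NormedSpace ℝ V] (p : Submodule ℝ V) :
    Submodule ℝ (E →L[ℝ] V) where
  carrier := {T | ∀ u, T u ∈ p}
  add_mem' := fun {a b} ha hb u => by
    simpa using p.add_mem (ha u) (hb u)
  zero_mem' := fun u => by simp
  smul_mem' := fun c T hT u => by
    simpa using p.smul_mem c (hT u)

set_option maxHeartbeats 1000000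
set_option synthInstance.maxHeartbeats 400000

/-- **Isothermic maps in stereoprojection.**  With `F` valued in `𝔭∞^⊥`, `ω` valued
in `𝔭₀^⊥`, and `η_x(u) := exp(ad F(x))(ω_x(u))`, the form `η` is closed if and only
if `ω` is closed and `⁅dF ∧ ω⁆ = 0`. -/
theorem eta_closed_iff_omega_closed_and_bracket_symm
    {L : Type*} [NormedAddCommGroup L] [NormedSpace ℝ L] [FiniteDimensional ℝ L]
    (B : LieStructure L) (hss : B.IsSemisimple)
    {E : Type*} [NormedAddCommGroup E] [NormedSpace ℝ E] [FiniteDimensional ℝ E]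
    (U : Set E) (hU : IsOpen U)
    (p0 pinf : Submodule ℝ L)
    (h0 : B.IsH1Parabolic p0) (hinf : B.IsH1Parabolic pinf)
    (hc : B.ComplPair p0 pinf)
    (F : E → L) (hF : ContDiffOn ℝ (⊤ : ℕ∞) F U)
    (hFval : ∀ x ∈ U, F x ∈ B.polar pinf)
    (ω : E → E →L[ℝ] L) (hω : ContDiffOn ℝ (⊤ : ℕ∞) ω U)
    (hωval : ∀ x ∈ U, ∀ u : E, ω x u ∈ B.polar p0)
    (η : E → E →L[ℝ] L)
    (hη : ∀ x : E, η x = (LinearMap.toContinuousLinearMap (B.expAd (F x))).comp (ω x)) :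
    (∀ x ∈ U, ∀ u v : E, fderiv ℝ η x u v = fderiv ℝ η x v u) ↔
    ((∀ x ∈ U, ∀ u v : E, fderiv ℝ ω x u v = fderiv ℝ ω x v u) ∧
      (∀ x ∈ U, ∀ u v : E,
        B.bracket (fderiv ℝ F x u) (ω x v) = B.bracket (fderiv ℝ F x v) (ω x u))) := by
  rcases subsingleton_or_nontrivial L with hL | hL
  · exact ⟨fun _ => ⟨fun x _ u v => Subsingleton.elim _ _,
      fun x _ u v => Subsingleton.elim _ _⟩, fun _ x _ u v => Subsingleton.elim _ _⟩
  have hrk : 2 ≤ finrank ℝ L := by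
    rcases Nat.lt_or_ge (finrank ℝ L) 2 with h | h
    · exfalso
      have h1 : 0 < finrank ℝ L := Module.finrank_pos
      have heq : finrank ℝ L = 1 := by omega
      obtain ⟨v, hv0, hall⟩ := finrank_eq_one_iff'.mp heq
      have hadv : B.ad v = 0 := by
        ext w
        obtain ⟨c, rfl⟩ := hall w
        show B.bracket v (c • v) = 0
        rw [map_smul, B.alternating, smul_zero]
      exact hv0 (hss v fun y => by simp [LieStructure.killing, hadv, zero_mul, map_zero])
    · exact h
  -- abbreviations and structural facts
  have habel_a : ∀ x ∈ B.polar pinf, ∀ y ∈ B.polar pinf, B.bracket x y = 0 := hinf.2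
  have habel_b : ∀ x ∈ B.polar p0, ∀ y ∈ B.polar p0, B.bracket x y = 0 := h0.2
  have hppinf : B.polar (B.polar pinf) = pinf := B.polar_polar hss pinf
  have hpp0 : B.polar (B.polar p0) = p0 := B.polar_polar hss p0
  have ha_le : B.polar pinf ≤ pinf := B.polar_le_self hss h0 hinf hc
  have haa : B.polar pinf ≤ B.polar (B.polar pinf) := by rw [hppinf]; exact ha_le
  -- differentiability
  have hFd : ∀ x ∈ U, HasFDerivAt F (fderiv ℝ F x) x := fun x hx =>
    ((hF.differentiableOn (by simp)).differentiableAt (hU.mem_nhds hx)).hasFDerivAt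
  have hωd : ∀ x ∈ U, HasFDerivAt ω (fderiv ℝ ω x) x := fun x hx =>
    ((hω.differentiableOn (by simp)).differentiableAt (hU.mem_nhds hx)).hasFDerivAt
  -- derivative membership
  have hf'mem : ∀ x ∈ U, ∀ u : E, fderiv ℝ F x u ∈ B.polar pinf := fun x hx u =>
    fderiv_mem_of_mem hU hFval hx (hFd x hx) u
  have hω'mem : ∀ x ∈ U, ∀ u v : E, fderiv ℝ ω x u v ∈ B.polar p0 := by
    intro x hx u v
    have h1 : ∀ y ∈ U, ω y ∈ (clmSub (B.polar p0) : Submodule ℝ (E →L[ℝ] L)) :=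
      fun y hy w => hωval y hy w
    exact fderiv_mem_of_mem hU h1 hx (hωd x hx) u v
  -- bracket membership facts
  have hmem_pa : ∀ z ∈ B.polar pinf, ∀ w : L, B.bracket z w ∈ B.polar (B.polar pinf) :=
    fun z hz w => B.bracket_mem_polar_polar habel_a hz w
  have hmem_pinf : ∀ z ∈ B.polar pinf, ∀ w : L, B.bracket z w ∈ pinf := fun z hz w => by
    rw [← hppinf]; exact hmem_pa z hz w
  have hmem_pb : ∀ z ∈ B.polar pinf, ∀ w ∈ B.polar p0,
      B.bracket z w ∈ B.polar (B.polar p0) := fun z hz w hw => by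
    rw [B.bracket_antisymm]
    exact (B.polar (B.polar p0)).neg_mem (B.bracket_mem_polar_polar habel_b hw z)
  have hmem_a : ∀ z ∈ B.polar pinf, ∀ m ∈ pinf, B.bracket z m ∈ B.polar pinf :=
    fun z hz m hm => by
      rw [B.bracket_antisymm]
      exact (B.polar pinf).neg_mem (B.bracket_mem_polar hinf.1 hm hz)
  -- the key derivative formula
  have hkey : ∀ x ∈ U, ∀ u v : E, fderiv ℝ η x u v =
      B.bracket (fderiv ℝ F x u) (ω x v)
      + B.bracket (fderiv ℝ F x u) (B.bracket (F x) (ω x v))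
      + (fderiv ℝ ω x u v + B.bracket (F x) (fderiv ℝ ω x u v)
        + (2⁻¹ : ℝ) • B.bracket (F x) (B.bracket (F x) (fderiv ℝ ω x u v))) := by
    intro x hx u v
    have h1 : HasFDerivAt (fun y => B.adCL (F y)) (B.adCL.comp (fderiv ℝ F x)) x :=
      B.adCL.hasFDerivAt.comp x (hFd x hx)
    have h2 := h1.mul' h1
    have h3 := h2.const_smul (2⁻¹ : ℝ)
    have hG : HasFDerivAt
        (fun y => (1 : L →L[ℝ] L) + B.adCL (F y)
          + (2⁻¹ : ℝ) • (B.adCL (F y) * B.adCL (F y)))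
        ((0 : E →L[ℝ] (L →L[ℝ] L)) + B.adCL.comp (fderiv ℝ F x)
          + (2⁻¹ : ℝ) • (B.adCL (F x) • (B.adCL.comp (fderiv ℝ F x))
            + (B.adCL.comp (fderiv ℝ F x)).smulRight (B.adCL (F x)))) x :=
      ((hasFDerivAt_const _ _).add h1).add h3
    have hcomp := hG.clm_comp (hωd x hx)
    have heqev : η =ᶠ[nhds x] fun y =>
        ((1 : L →L[ℝ] L) + B.adCL (F y)
          + (2⁻¹ : ℝ) • (B.adCL (F y) * B.adCL (F y))).comp (ω y) := by
      refine Filter.eventuallyEq_of_mem (hU.mem_nhds hx) fun y hy => ?_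
      rw [hη y, B.expAd_eq_quadratic (B.ad_cube_eq_zero hss h0 hinf hc (hFval y hy)) hrk]
    have hηd := hcomp.congr_of_eventuallyEq heqev
    rw [hηd.fderiv]
    have hcm : B.bracket (F x) (B.bracket (fderiv ℝ F x u) (ω x v))
        = B.bracket (fderiv ℝ F x u) (B.bracket (F x) (ω x v)) := by
      have hz : B.bracket (F x) (fderiv ℝ F x u) = 0 :=
        habel_a _ (hFval x hx) _ (hf'mem x hx u)
      rw [B.jacobi (F x) (fderiv ℝ F x u) (ω x v), hz]
      simp only [map_zero, LinearMap.zero_apply, zero_add]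
    simp only [ContinuousLinearMap.add_apply, ContinuousLinearMap.coe_comp',
      Function.comp_apply, ContinuousLinearMap.compL_apply, ContinuousLinearMap.flip_apply,
      ContinuousLinearMap.comp_apply, ContinuousLinearMap.zero_apply,
      ContinuousLinearMap.smul_apply, ContinuousLinearMap.smulRight_apply,
      ContinuousLinearMap.one_apply, ContinuousLinearMap.mul_apply, adCL_apply, zero_add]
    simp only [show ∀ (T S : L →L[ℝ] L) (z : L), (T • S) z = T (S z) from fun _ _ _ => rfl, adCL_apply]
    rw [hcm]
    module
  constructor
  · -- forward direction
    intro hηsym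
    have main : ∀ x ∈ U, ∀ u v : E,
        (fderiv ℝ ω x u v = fderiv ℝ ω x v u) ∧
        (B.bracket (fderiv ℝ F x u) (ω x v) = B.bracket (fderiv ℝ F x v) (ω x u)) := by
      intro x hx u v
      have h1 := hηsym x hx u v
      rw [hkey x hx u v, hkey x hx v u] at h1
      have heq0 :
          (B.bracket (fderiv ℝ F x u) (ω x v) - B.bracket (fderiv ℝ F x v) (ω x u))
          + (B.bracket (fderiv ℝ F x u) (B.bracket (F x) (ω x v))
            - B.bracket (fderiv ℝ F x v) (B.bracket (F x) (ω x u)))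
          + ((fderiv ℝ ω x u v - fderiv ℝ ω x v u)
            + B.bracket (F x) (fderiv ℝ ω x u v - fderiv ℝ ω x v u)
            + (2⁻¹ : ℝ) • B.bracket (F x)
                (B.bracket (F x) (fderiv ℝ ω x u v - fderiv ℝ ω x v u))) = 0 := by
        simp only [map_sub]
        linear_combination (norm := module) h1
      -- memberships
      have hFxa : F x ∈ B.polar pinf := hFval x hx
      have hsb : fderiv ℝ ω x u v - fderiv ℝ ω x v u ∈ B.polar p0 :=
        Submodule.sub_mem _ (hω'mem x hx u v) (hω'mem x hx v u)
      have hta : B.bracket (fderiv ℝ F x u) (ω x v) - B.bracket (fderiv ℝ F x v) (ω x u)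
          ∈ B.polar (B.polar pinf) :=
        Submodule.sub_mem _ (hmem_pa _ (hf'mem x hx u) _) (hmem_pa _ (hf'mem x hx v) _)
      have htb : B.bracket (fderiv ℝ F x u) (ω x v) - B.bracket (fderiv ℝ F x v) (ω x u)
          ∈ B.polar (B.polar p0) :=
        Submodule.sub_mem _ (hmem_pb _ (hf'mem x hx u) _ (hωval x hx v))
          (hmem_pb _ (hf'mem x hx v) _ (hωval x hx u))
      have hr1a : B.bracket (fderiv ℝ F x u) (B.bracket (F x) (ω x v))
          - B.bracket (fderiv ℝ F x v) (B.bracket (F x) (ω x u)) ∈ B.polar pinf :=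
        Submodule.sub_mem _
          (hmem_a _ (hf'mem x hx u) _ (hmem_pinf _ hFxa _))
          (hmem_a _ (hf'mem x hx v) _ (hmem_pinf _ hFxa _))
      have hFsa : B.bracket (F x) (fderiv ℝ ω x u v - fderiv ℝ ω x v u)
          ∈ B.polar (B.polar pinf) := hmem_pa _ hFxa _
      have hFFs : B.bracket (F x) (B.bracket (F x) (fderiv ℝ ω x u v - fderiv ℝ ω x v u))
          ∈ B.polar pinf := hmem_a _ hFxa _ (hmem_pinf _ hFxa _)
      -- first conclusion : s = 0
      have hs0 : fderiv ℝ ω x u v - fderiv ℝ ω x v u = 0 := by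
        have hs_pa : fderiv ℝ ω x u v - fderiv ℝ ω x v u ∈ B.polar (B.polar pinf) := by
          have hrw : fderiv ℝ ω x u v - fderiv ℝ ω x v u =
              -((B.bracket (fderiv ℝ F x u) (ω x v) - B.bracket (fderiv ℝ F x v) (ω x u))
              + B.bracket (F x) (fderiv ℝ ω x u v - fderiv ℝ ω x v u)
              + ((B.bracket (fderiv ℝ F x u) (B.bracket (F x) (ω x v))
                  - B.bracket (fderiv ℝ F x v) (B.bracket (F x) (ω x u)))
                + (2⁻¹ : ℝ) • B.bracket (F x)
                    (B.bracket (F x) (fderiv ℝ ω x u v - fderiv ℝ ω x v u)))) := by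
            linear_combination (norm := module) heq0
          rw [hrw]
          refine (B.polar (B.polar pinf)).neg_mem ?_
          refine Submodule.add_mem _ (Submodule.add_mem _ hta hFsa) ?_
          exact haa (Submodule.add_mem _ hr1a (Submodule.smul_mem _ _ hFFs))
        apply hss
        intro y
        have hy : y ∈ p0 ⊔ B.polar pinf := by rw [hc.1.codisjoint.eq_top]; trivial
        obtain ⟨y0, hy0, y1, hy1, rfl⟩ := Submodule.mem_sup.mp hy
        rw [B.killing_add_right, hsb y0 hy0, hs_pa y1 hy1, add_zero]
      have ht0 : B.bracket (fderiv ℝ F x u) (ω x v)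
          - B.bracket (fderiv ℝ F x v) (ω x u) = 0 := by
        have heq1 : (B.bracket (fderiv ℝ F x u) (ω x v)
            - B.bracket (fderiv ℝ F x v) (ω x u))
            + (B.bracket (fderiv ℝ F x u) (B.bracket (F x) (ω x v))
              - B.bracket (fderiv ℝ F x v) (B.bracket (F x) (ω x u))) = 0 := by
          rw [hs0] at heq0
          simpa only [map_zero, LinearMap.zero_apply, smul_zero, add_zero, zero_add]
            using heq0
        have hta2 : B.bracket (fderiv ℝ F x u) (ω x v)
            - B.bracket (fderiv ℝ F x v) (ω x u) ∈ B.polar pinf := by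
          have hrw : B.bracket (fderiv ℝ F x u) (ω x v)
              - B.bracket (fderiv ℝ F x v) (ω x u)
              = -(B.bracket (fderiv ℝ F x u) (B.bracket (F x) (ω x v))
                - B.bracket (fderiv ℝ F x v) (B.bracket (F x) (ω x u))) := by
            linear_combination (norm := module) heq1
          rw [hrw]
          exact (B.polar pinf).neg_mem hr1a
        have htp0 : B.bracket (fderiv ℝ F x u) (ω x v)
            - B.bracket (fderiv ℝ F x v) (ω x u) ∈ p0 := by rw [← hpp0]; exact htb
        exact Submodule.disjoint_def.mp hc.1.disjoint _ htp0 hta2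
      exact ⟨sub_eq_zero.mp hs0, sub_eq_zero.mp ht0⟩
    exact ⟨fun x hx u v => (main x hx u v).1, fun x hx u v => (main x hx u v).2⟩
  · -- backward direction
    rintro ⟨hωsym, hbr⟩ x hx u v
    rw [hkey x hx u v, hkey x hx v u]
    have e1 : fderiv ℝ ω x u v = fderiv ℝ ω x v u := hωsym x hx u v
    have e2 := hbr x hx u v
    have e3 : B.bracket (fderiv ℝ F x u) (B.bracket (F x) (ω x v))
        = B.bracket (fderiv ℝ F x v) (B.bracket (F x) (ω x u)) := by
      have hz1 : B.bracket (fderiv ℝ F x u) (F x) = 0 :=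
        habel_a _ (hf'mem x hx u) _ (hFval x hx)
      have hz2 : B.bracket (fderiv ℝ F x v) (F x) = 0 :=
        habel_a _ (hf'mem x hx v) _ (hFval x hx)
      rw [B.jacobi (fderiv ℝ F x u) (F x) (ω x v), hz1,
        B.jacobi (fderiv ℝ F x v) (F x) (ω x u), hz2, e2]
      simp only [map_zero, LinearMap.zero_apply, zero_add]
    rw [e1, e2, e3]
end

section
/- Let (𝔭₀, 𝔭∞) be a complementary pair of height-one parabolic subalgebras of a finite-dimensional real semisimple Lie algebra 𝔤, U an open subset of a finite-dimensional real normed space E, F : U → 𝔭∞^⊥ smooth, ω a closed 𝔭₀^⊥-valued 1-form on U with ⁅(DF)_x(u), ω_x(v)⁆ = ⁅(DF)_x(v), ω_x(u)⁆ for all x, u, v, and η_x(u) := exp(ad F(x))(ω_x(u)). Let π : 𝔤 → 𝔭₀^⊥ be the linear projection with kernel 𝔭∞ (relative to the decomposition 𝔤 = 𝔭₀^⊥ ⊕ 𝔭∞). Then π(η_x(u)) = ω_x(u) for all x, u; consequently, if Φ : U → 𝔤 is smooth with (DΦ)_x = η_x for all x (a primitive of η), then F^c := π ∘ Φ satisfies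 (DF^c)_x = ω_x, i.e. the 𝔭₀^⊥-component of any primitive of η is a primitive of ω (a stereoprojected Christoffel transform of the isothermic map f = exp(ad F)(𝔭₀)). -/
open Module

open LieStructure


namespace ChristoffelAux
open LieStructure

variable {L : Type*} [NormedAddCommGroup L] [NormedSpace ℝ L] (B : LieStructure L)

lemma mem_polar {p : Submodule ℝ L} {x : L} :
    x ∈ B.polar p ↔ ∀ y ∈ p, B.killing x y = 0 := Iff.rfl

lemma killing_comm (x y : L) : B.killing x y = B.killing y x :=
  LinearMap.trace_mul_comm ℝ (B.ad x) (B.ad y)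

lemma ad_bracket (a b : L) :
    B.ad (B.bracket a b) = B.ad a * B.ad b - B.ad b * B.ad a := by
  ext z
  have h := B.jacobi a b z
  simp only [ad, LinearMap.sub_apply, Module.End.mul_apply]
  exact eq_sub_of_add_eq h.symm

lemma killing_invariant (a b c : L) :
    B.killing (B.bracket a b) c = - B.killing b (B.bracket a c) := by
  unfold LieStructure.killing
  rw [ad_bracket, ad_bracket]
  simp only [sub_mul, mul_sub, map_sub, mul_assoc]
  rw [LinearMap.trace_mul_comm ℝ (B.ad a) (B.ad b * B.ad c)]
  simp only [mul_assoc]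
  ring

lemma killing_sub_left (x y c : L) :
    B.killing (x - y) c = B.killing x c - B.killing y c := by
  simp [LieStructure.killing, LieStructure.ad, map_sub, sub_mul]

lemma killing_add_right (z s c : L) :
    B.killing z (s + c) = B.killing z s + B.killing z c := by
  simp [LieStructure.killing, LieStructure.ad, map_add, mul_add]

/-- For `a ∈ 𝔭∞^⊥`, `⁅a, b⁆ ∈ 𝔭∞` for every `b`. -/
lemma bracket_mem (hss : B.IsSemisimple) {p0 pinf : Submodule ℝ L}
    (hinf : B.IsH1Parabolic pinf) (hc : B.ComplPair p0 pinf)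
    {a : L} (ha : a ∈ B.polar pinf) (b : L) : B.bracket a b ∈ pinf := by
  obtain ⟨y, hy, z, hz, hyz⟩ := Submodule.mem_sup.mp
    (show B.bracket a b ∈ pinf ⊔ B.polar p0 by rw [hc.2.sup_eq_top]; trivial)
  have hz0 : z = 0 := by
    refine hss z (fun t => ?_)
    obtain ⟨s, hs, c, hcc, hsc⟩ := Submodule.mem_sup.mp
      (show t ∈ p0 ⊔ B.polar pinf by rw [hc.1.sup_eq_top]; trivial)
    have hzw : z = B.bracket a b - y := by rw [← hyz]; abel
    have h1 : B.killing z s = 0 := hz s hs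
    have h2 : B.killing (B.bracket a b) c = 0 := by
      rw [killing_invariant, hinf.2 a ha c hcc]
      simp [LieStructure.killing, LieStructure.ad, map_zero, zero_mul]
    have h3 : B.killing y c = 0 := by
      rw [killing_comm]; exact hcc y hy
    rw [← hsc, killing_add_right, h1, hzw, killing_sub_left, h2, h3]
    ring
  rw [hz0, add_zero] at hyz
  rwa [← hyz]

end ChristoffelAux

/-- **Universal Christoffel transform.**  With `η = exp(ad F)·ω` as in the
stereoprojected isothermic setting, and `π : 𝔤 → 𝔭₀^⊥` the projection with kernel
`𝔭∞` (for `𝔤 = 𝔭₀^⊥ ⊕ 𝔭∞`), one has `π(η_x(u)) = ω_x(u)`; hence the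
`𝔭₀^⊥`-component `F^c := π ∘ Φ` of any primitive `Φ` of `η` is a primitive of `ω`
(a stereoprojected Christoffel transform). -/
theorem christoffel_from_primitive
    {L : Type*} [NormedAddCommGroup L] [NormedSpace ℝ L] [FiniteDimensional ℝ L]
    (B : LieStructure L) (hss : B.IsSemisimple)
    {E : Type*} [NormedAddCommGroup E] [NormedSpace ℝ E] [FiniteDimensional ℝ E]
    (U : Set E) (hU : IsOpen U)
    (p0 pinf : Submodule ℝ L)
    (h0 : B.IsH1Parabolic p0) (hinf : B.IsH1Parabolic pinf)
    (hc : B.ComplPair p0 pinf)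
    (F : E → L) (hF : ContDiffOn ℝ (⊤ : ℕ∞) F U)
    (hFval : ∀ x ∈ U, F x ∈ B.polar pinf)
    (ω : E → E →L[ℝ] L) (hω : ContDiffOn ℝ (⊤ : ℕ∞) ω U)
    (hωval : ∀ x ∈ U, ∀ u : E, ω x u ∈ B.polar p0)
    (hωclosed : ∀ x ∈ U, ∀ u v : E, fderiv ℝ ω x u v = fderiv ℝ ω x v u)
    (hsymm : ∀ x ∈ U, ∀ u v : E,
      B.bracket (fderiv ℝ F x u) (ω x v) = B.bracket (fderiv ℝ F x v) (ω x u))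
    (η : E → E →L[ℝ] L)
    (hη : ∀ x : E, η x = (LinearMap.toContinuousLinearMap (B.expAd (F x))).comp (ω x))
    -- `π` is the projection onto `𝔭₀^⊥` along `𝔭∞`
    (π : L →ₗ[ℝ] L)
    (hπ₁ : ∀ y ∈ B.polar p0, π y = y) (hπ₂ : ∀ y ∈ pinf, π y = 0) :
    (∀ x ∈ U, ∀ u : E, π (η x u) = ω x u) ∧
    (∀ Φ : E → L, ContDiffOn ℝ (⊤ : ℕ∞) Φ U →
      (∀ x ∈ U, ∀ u : E, fderiv ℝ Φ x u = η x u) →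
      ∀ x ∈ U, ∀ u : E, fderiv ℝ (fun y => π (Φ y)) x u = ω x u) := by
  open ChristoffelAux in
  have key : ∀ x ∈ U, ∀ u : E, π (η x u) = ω x u := by
    intro x hx u
    have hmem : ∀ k : ℕ, ((B.ad (F x)) ^ (k + 1)) (ω x u) ∈ pinf := by
      intro k
      rw [pow_succ']
      exact ChristoffelAux.bracket_mem B hss hinf hc (hFval x hx) _
    have hexp : B.expAd (F x) (ω x u) =
        ∑ k ∈ Finset.range (Module.finrank ℝ L + 1),
          (k.factorial : ℝ)⁻¹ • (((B.ad (F x)) ^ k) (ω x u)) := by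
      simp [LieStructure.expAd, LinearMap.sum_apply, LinearMap.smul_apply]
    have hηxu : η x u = B.expAd (F x) (ω x u) := by
      rw [hη x]; rfl
    rw [hηxu, hexp, map_sum]
    rw [Finset.sum_eq_single 0]
    · simp [hπ₁ _ (hωval x hx u)]
    · intro k _ hk
      obtain ⟨m, rfl⟩ := Nat.exists_eq_succ_of_ne_zero hk
      rw [map_smul, hπ₂ _ (hmem m), smul_zero]
    · intro h
      exact absurd (Finset.mem_range.mpr (Nat.succ_pos _)) h
  refine ⟨key, ?_⟩
  intro Φ hΦ hΦ' x hx u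
  have hd : DifferentiableAt ℝ Φ x :=
    (hΦ.contDiffAt (hU.mem_nhds hx)).differentiableAt (by simp)
  have hcomp : fderiv ℝ (fun y => π (Φ y)) x =
      (LinearMap.toContinuousLinearMap π).comp (fderiv ℝ Φ x) :=
    ((LinearMap.toContinuousLinearMap π).hasFDerivAt.comp x hd.hasFDerivAt).fderiv
  rw [hcomp]
  show π (fderiv ℝ Φ x u) = ω x u
  rw [hΦ' x hx u]
  exact key x hx u
end
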